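/- Let M be a strongly base orderable matroid on a finite ground set S, let E be a partition of S into n pairs, and let w : E → ℝ≥0 be a weight function. Let t be a positive integer with t ≤ n, let B ⊆ E be a maximum-weight feasible set of pairs, and let A ⊆ E be a feasible set of pairs that is a (1/n²)-local optimum for (2t+1)-moves (i.e., every (2t+1)-move for A has gain < (1/n²)·w(A)). Then w(A) ≥ (1 − 2/(t+2))·w(B). -/

import Mathlib

open Finset

variable {α : Type*} [DecidableEq α]

/-- `E` is a partition of the finite set `S` into pairs: every member of `E` has two elements,
the members of `E` are pairwise disjoint, and their union is `S`. -/
def IsPairPartition (S : Finset α) (E : Finset (Finset α)) : Prop :=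
  (∀ e ∈ E, e.card = 2) ∧ (E : Set (Finset α)).PairwiseDisjoint id ∧ E.biUnion id = S

/-- A matroid is strongly base orderable if for every pair of bases `I`, `J` there is a
bijection `π : I → J` such that for every `K ⊆ I`, the set `π(K) ∪ (I \ K)` is a base. -/
def Matroid.StronglyBaseOrderable (M : Matroid α) : Prop :=
  ∀ I J : Set α, M.IsBase I → M.IsBase J →
    ∃ π : α → α, Set.BijOn π I J ∧ ∀ K ⊆ I, M.IsBase (π '' K ∪ (I \ K))

/-- A set of pairs `A ⊆ E` is feasible for `M` if the set `⋃ A` of covered elements is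
independent in `M`. -/
def FeasibleSet (M : Matroid α) (A : Finset (Finset α)) : Prop :=
  M.Indep ↑(A.biUnion id)

/-- `(Abar, Bbar)` is an `s`-move for the feasible set `A` (inside the set of pairs `E`):
`Abar ⊆ A`, `Bbar ⊆ E \ A`, `|Abar| + |Bbar| ≤ s` and `A Δ (Abar ∪ Bbar)` is feasible.
Its gain is `w Bbar - w Abar`. -/
def IsMove (M : Matroid α) (E A : Finset (Finset α)) (s : ℕ)
    (Abar Bbar : Finset (Finset α)) : Prop :=
  Abar ⊆ A ∧ Bbar ⊆ E \ A ∧ Abar.card + Bbar.card ≤ s ∧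
    FeasibleSet M (symmDiff A (Abar ∪ Bbar))

namespace WPD

attribute [local instance] Classical.propDecidable

/-- The chain lemma: the exchange bijection between two bases of a strongly base
orderable matroid can be chosen to fix the intersection pointwise. -/
lemma exists_good_bij (M : Matroid α) (hsbo : M.StronglyBaseOrderable) {I J : Set α}
    (hI : M.IsBase I) (hJ : M.IsBase J) (hIfin : I.Finite) :
    ∃ π : α → α, Set.BijOn π I J ∧ (∀ K ⊆ I, M.IsBase (π '' K ∪ (I \ K))) ∧
      ∀ z ∈ I ∩ J, π z = z := by
  classical
  obtain ⟨f, hbij, hex⟩ := hsbo I J hI hJ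
  have hmapsTo : ∀ x ∈ I, f x ∈ J := hbij.mapsTo
  have hinjOn : Set.InjOn f I := hbij.injOn
  -- iterates starting in I\J that stay in I are all in I, and in J after the first step
  have hiterJ : ∀ (x : α) (j : ℕ), 1 ≤ j → (∀ i < j, f^[i] x ∈ I) → f^[j] x ∈ J := by
    intro x j hj hIn
    obtain ⟨i, rfl⟩ := Nat.exists_eq_add_of_le hj
    rw [Nat.add_comm, Function.iterate_succ_apply']
    exact hmapsTo _ (hIn i (by omega))
  -- peeling: injectivity of equal-length iterates staying in I
  have peel : ∀ (m : ℕ) (u v : α), (∀ j < m, f^[j] u ∈ I) → (∀ j < m, f^[j] v ∈ I) →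
      f^[m] u = f^[m] v → u = v := by
    intro m
    induction m with
    | zero => intro u v _ _ h; simpa using h
    | succ m ih =>
      intro u v hu hv h
      rw [Function.iterate_succ_apply', Function.iterate_succ_apply'] at h
      exact ih u v (fun j hj => hu j (by omega)) (fun j hj => hv j (by omega))
        (hinjOn (hu m (by omega)) (hv m (by omega)) h)
  -- stopping time
  have hstop : ∀ x, ∃ k, x ∈ I \ J →
      (1 ≤ k ∧ f^[k] x ∉ I ∧ ∀ j < k, f^[j] x ∈ I) := by
    intro x
    by_cases hx : x ∈ I \ J
    · have hex1 : ∃ k, 1 ≤ k ∧ f^[k] x ∉ I := by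
        by_contra hcon
        push_neg at hcon
        have hallI : ∀ k, f^[k] x ∈ I := by
          intro k
          rcases Nat.eq_zero_or_pos k with rfl | hk
          · exact hx.1
          · exact hcon k hk
        have hinj : Function.Injective (fun k => f^[k] x) := by
          have hne : ∀ (d i : ℕ), 1 ≤ d → f^[i + d] x ≠ f^[i] x := by
            intro d i hd
            induction i with
            | zero =>
              intro h
              simp only [Nat.zero_add, Function.iterate_zero_apply] at h
              exact hx.2 (h ▸ hiterJ x d hd (fun i _ => hallI i))
            | succ i ih =>
              intro h
              have : f^[i + d] x = f^[i] x := by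
                have h1 : i + 1 + d = (i + d) + 1 := by omega
                rw [h1, Function.iterate_succ_apply', Function.iterate_succ_apply'] at h
                exact hinjOn (hallI _) (hallI _) h
              exact ih this
          intro a b hab
          rcases lt_trichotomy a b with h | h | h
          · exact absurd hab.symm (by
              have := hne (b - a) a (by omega)
              rw [Nat.add_sub_cancel' (le_of_lt h)] at this
              exact this)
          · exact h
          · exact absurd hab (by
              have := hne (a - b) b (by omega)
              rw [Nat.add_sub_cancel' (le_of_lt h)] at this
              exact this)
        exact (Set.infinite_of_injective_forall_mem hinj (fun k => hallI k)) hIfin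
      obtain ⟨k, hk1, hk2⟩ := hex1
      -- take minimal such k
      have hmin := Nat.find_spec (⟨k, hk1, hk2⟩ : ∃ k, 1 ≤ k ∧ f^[k] x ∉ I)
      set k0 := Nat.find (⟨k, hk1, hk2⟩ : ∃ k, 1 ≤ k ∧ f^[k] x ∉ I) with hk0
      refine ⟨k0, fun _ => ⟨hmin.1, hmin.2, ?_⟩⟩
      intro j hj
      rcases Nat.eq_zero_or_pos j with rfl | hjpos
      · simpa using hx.1
      · by_contra hjI
        exact Nat.find_min (⟨k, hk1, hk2⟩ : ∃ k, 1 ≤ k ∧ f^[k] x ∉ I) hj ⟨hjpos, hjI⟩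
    · exact ⟨0, fun h => absurd h hx⟩
  choose Kf hKf using hstop
  set π : α → α := fun z => if z ∈ I \ J then f^[Kf z] z else z with hπ
  have hπ_fix : ∀ z ∈ I ∩ J, π z = z := by
    intro z hz
    simp only [hπ]
    rw [if_neg (by simp [hz.2])]
  have hπ_mem : ∀ z ∈ I \ J, π z = f^[Kf z] z := by
    intro z hz; simp only [hπ, if_pos hz]
  have hρJ : ∀ z ∈ I \ J, f^[Kf z] z ∈ J \ I := by
    intro z hz
    obtain ⟨h1, h2, h3⟩ := hKf z hz
    exact ⟨hiterJ z _ h1 h3, h2⟩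
  -- MapsTo
  have hMaps : Set.MapsTo π I J := by
    intro z hz
    by_cases hzJ : z ∈ J
    · rw [hπ_fix z ⟨hz, hzJ⟩]; exact hzJ
    · rw [hπ_mem z ⟨hz, hzJ⟩]; exact (hρJ z ⟨hz, hzJ⟩).1
  -- InjOn
  have hInj : Set.InjOn π I := by
    intro z₁ h₁ z₂ h₂ heq
    by_cases h₁J : z₁ ∈ J <;> by_cases h₂J : z₂ ∈ J
    · rwa [hπ_fix z₁ ⟨h₁, h₁J⟩, hπ_fix z₂ ⟨h₂, h₂J⟩] at heq
    · rw [hπ_fix z₁ ⟨h₁, h₁J⟩, hπ_mem z₂ ⟨h₂, h₂J⟩] at heq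
      exact absurd h₁ (heq ▸ (hρJ z₂ ⟨h₂, h₂J⟩).2)
    · rw [hπ_mem z₁ ⟨h₁, h₁J⟩, hπ_fix z₂ ⟨h₂, h₂J⟩] at heq
      exact absurd h₂ (heq ▸ (hρJ z₁ ⟨h₁, h₁J⟩).2)
    · rw [hπ_mem z₁ ⟨h₁, h₁J⟩, hπ_mem z₂ ⟨h₂, h₂J⟩] at heq
      obtain ⟨ha1, ha2, ha3⟩ := hKf z₁ ⟨h₁, h₁J⟩
      obtain ⟨hb1, hb2, hb3⟩ := hKf z₂ ⟨h₂, h₂J⟩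
      -- wlog Kf z₁ ≤ Kf z₂
      have main : ∀ u v : α, u ∈ I \ J → v ∈ I \ J → Kf u ≤ Kf v →
          f^[Kf u] u = f^[Kf v] v → u = v := by
        intro u v hu hv hKle heq'
        obtain ⟨hu1, hu2, hu3⟩ := hKf u hu
        obtain ⟨hv1, hv2, hv3⟩ := hKf v hv
        have hdec : f^[Kf v] v = f^[Kf u] (f^[Kf v - Kf u] v) := by
          rw [← Function.iterate_add_apply, Nat.add_sub_cancel' hKle]
        have hvIter : ∀ j < Kf u, f^[j] (f^[Kf v - Kf u] v) ∈ I := by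
          intro j hj
          rw [← Function.iterate_add_apply]
          exact hv3 _ (by omega)
        have := peel (Kf u) u (f^[Kf v - Kf u] v) (fun j hj => hu3 j hj) hvIter
          (by rw [← hdec, heq'])
        by_cases hlt : Kf u < Kf v
        · exfalso
          have : u ∈ J := this ▸ hiterJ v _ (by omega) (fun i hi => hv3 i (by omega))
          exact hu.2 this
        · have hKeq : Kf u = Kf v := by omega
          rw [hKeq] at this
          simpa using this
      rcases le_total (Kf z₁) (Kf z₂) with h | h
      · exact main z₁ z₂ ⟨h₁, h₁J⟩ ⟨h₂, h₂J⟩ h heq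
      · exact (main z₂ z₁ ⟨h₂, h₂J⟩ ⟨h₁, h₁J⟩ h heq.symm).symm
  -- SurjOn via cardinality
  have hJfin : J.Finite := hbij.image_eq ▸ hIfin.image f
  have hSurj : Set.SurjOn π I J := by
    have himg : π '' I ⊆ J := Set.mapsTo_iff_image_subset.mp hMaps
    have hcard : (π '' I).ncard = J.ncard := by
      rw [Set.ncard_image_of_injOn hInj, ← hbij.image_eq, Set.ncard_image_of_injOn hinjOn]
    have : π '' I = J := Set.eq_of_subset_of_ncard_le himg (le_of_eq hcard.symm) hJfin
    exact fun y hy => this ▸ hy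
  -- Exchange property
  have hExch : ∀ K ⊆ I, M.IsBase (π '' K ∪ (I \ K)) := by
    intro K hK
    set K₁ : Set α := K \ J with hK₁
    have hK₁I : K₁ ⊆ I \ J := fun z hz => ⟨hK hz.1, hz.2⟩
    -- the union of chains
    set T : Set α := {z | ∃ x ∈ K₁, ∃ j < Kf x, f^[j] x = z} with hT
    have hTI : T ⊆ I := by
      rintro z ⟨x, hx, j, hj, rfl⟩
      exact (hKf x (hK₁I hx)).2.2 j hj
    have hbase := hex T hTI
    -- claim the two sets agree
    have hgoal : π '' K ∪ (I \ K) = f '' T ∪ (I \ T) := by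
      apply Set.eq_of_subset_of_subset
      · rintro z (⟨x, hx, rfl⟩ | hz)
        · by_cases hxJ : x ∈ J
          · -- π x = x ∈ K ∩ J ; is x ∈ T ? x ∈ T iff chain hits it; x ∈ J, chain elements with j ≥ 1 are in J...
            rw [hπ_fix x ⟨hK hx, hxJ⟩]
            by_cases hxT : x ∈ T
            · -- x ∈ T : x = f^[j] y ; if j = 0 then y = x ∈ K₁ contradiction with x ∈ J; else x ∈ f '' T
              obtain ⟨y, hy, j, hj, hje⟩ := hxT
              rcases Nat.eq_zero_or_pos j with rfl | hjpos
              · simp at hje; subst hje; exact absurd hxJ hy.2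
              · left
                obtain ⟨j', rfl⟩ : ∃ j', j = j' + 1 := ⟨j - 1, by omega⟩
                rw [Function.iterate_succ_apply'] at hje
                exact ⟨f^[j'] y, ⟨y, hy, j', by omega, rfl⟩, hje⟩
            · exact Or.inr ⟨hK hx, hxT⟩
          · -- x ∈ K₁
            have hxK₁ : x ∈ K₁ := ⟨hx, hxJ⟩
            rw [hπ_mem x ⟨hK hx, hxJ⟩]
            left
            have h1 := (hKf x ⟨hK hx, hxJ⟩).1
            obtain ⟨j', hje⟩ : ∃ j', Kf x = j' + 1 := ⟨Kf x - 1, by omega⟩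
            rw [hje, Function.iterate_succ_apply']
            exact ⟨f^[j'] x, ⟨x, hxK₁, j', by omega, rfl⟩, rfl⟩
        · -- z ∈ I \ K
          by_cases hzT : z ∈ T
          · obtain ⟨y, hy, j, hj, hje⟩ := hzT
            rcases Nat.eq_zero_or_pos j with rfl | hjpos
            · simp at hje; subst hje; exact absurd hy.1 hz.2
            · left
              obtain ⟨j', rfl⟩ : ∃ j', j = j' + 1 := ⟨j - 1, by omega⟩
              rw [Function.iterate_succ_apply'] at hje
              exact ⟨f^[j'] y, ⟨y, hy, j', by omega, rfl⟩, hje⟩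
          · exact Or.inr ⟨hz.1, hzT⟩
      · rintro z (⟨x, hx, rfl⟩ | hz)
        · -- f x for x ∈ T : x = f^[j] y, j < Kf y. f x = f^[j+1] y.
          obtain ⟨y, hy, j, hj, rfl⟩ := hx
          have hrw : f (f^[j] y) = f^[j+1] y := (Function.iterate_succ_apply' f j y).symm
          rw [hrw]
          by_cases hend : j + 1 = Kf y
          · -- this is π y , y ∈ K₁ ⊆ K
            left
            refine ⟨y, hy.1, ?_⟩
            rw [hπ_mem y (hK₁I hy), hend]
          · -- intermediate: in I ∩ J, not in K (since in J, and K-part in J is fixed...)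
            have hmem : f^[j+1] y ∈ I := (hKf y (hK₁I hy)).2.2 (j+1) (by omega)
            have hmemJ : f^[j+1] y ∈ J := hiterJ y (j+1) (by omega)
              (fun i hi => (hKf y (hK₁I hy)).2.2 i (by omega))
            by_cases hzK : f^[j+1] y ∈ K
            · -- in K ∩ J , so π fixes it
              left
              exact ⟨f^[j+1] y, hzK, hπ_fix _ ⟨hmem, hmemJ⟩⟩
            · exact Or.inr ⟨hmem, hzK⟩
        · -- z ∈ I \ T : z ∉ K₁ (K₁ ⊆ T via j = 0)
          have hzK₁ : z ∉ K₁ := fun h => hz.2 ⟨z, h, 0, by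
            have := (hKf z (hK₁I h)).1; omega, rfl⟩
          by_cases hzK : z ∈ K
          · -- z ∈ K \ K₁ means z ∈ K ∩ J , fixed by π
            have hzJ : z ∈ J := by
              by_contra hzJ
              exact hzK₁ ⟨hzK, hzJ⟩
            exact Or.inl ⟨z, hzK, hπ_fix z ⟨hz.1, hzJ⟩⟩
          · exact Or.inr ⟨hz.1, hzK⟩
    rw [hgoal]
    exact hbase
  exact ⟨π, ⟨hMaps, hInj, hSurj⟩, hExch, hπ_fix⟩

/-- Bundled context for the local-search analysis. -/
structure Cfg (α : Type*) [DecidableEq α] where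
  M : Matroid α
  S : Finset α
  E : Finset (Finset α)
  A : Finset (Finset α)
  B : Finset (Finset α)
  t : ℕ
  n : ℕ
  I : Set α
  J : Set α
  π : α → α
  hE2 : ∀ e ∈ E, e.card = 2
  hEdisj : (E : Set (Finset α)).PairwiseDisjoint id
  hES : E.biUnion id = S
  hcard : E.card = n
  ht : 1 ≤ t
  htn : t ≤ n
  hAE : A ⊆ E
  hBE : B ⊆ E
  hAI : ↑(A.biUnion id) ⊆ I
  hBJ : ↑(B.biUnion id) ⊆ J
  hbij : Set.BijOn π I J
  hexch : ∀ K ⊆ I, M.IsBase (π '' K ∪ (I \ K))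
  hfix : ∀ z ∈ I ∩ J, π z = z

namespace Cfg

variable (c : Cfg α)

/-- The pair of `E` containing `z` (junk `∅` if none). -/
noncomputable def pOf (z : α) : Finset α := if h : ∃ e ∈ c.E, z ∈ e then h.choose else ∅

/-- The other element of the pair containing `z`. -/
noncomputable def oth (z : α) : α := if h : ∃ y ∈ c.pOf z, y ≠ z then h.choose else z

/-- Elements covered by `A`. -/
noncomputable def EA : Finset α := c.A.biUnion id

/-- Ports: elements covered by `B \ A`. -/
noncomputable def PB : Finset α := (c.B \ c.A).biUnion id

noncomputable def pinv (z : α) : α := @Function.invFunOn α α ⟨z⟩ c.π c.I z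

/-- One step of the alternating walk. -/
noncomputable def g (x : α) : Option α :=
  if x ∈ c.PB ∧ c.pinv x ∈ c.EA ∧ c.π (c.oth (c.pinv x)) ∈ c.PB
  then some (c.oth (c.π (c.oth (c.pinv x)))) else none

noncomputable def gk : ℕ → α → Option α
  | 0, x => some x
  | (i+1), x => (c.g x).bind (gk i)

noncomputable def ginv (y : α) : Option α :=
  if h : ∃ x, c.g x = some y then some h.choose else none

noncomputable def gkinv : ℕ → α → Option α
  | 0, x => some x
  | (i+1), x => (c.ginv x).bind (gkinv i)

/-- number of defined backward iterates within `range t`. -/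
noncomputable def cnt (u : α) : ℕ :=
  ((Finset.range c.t).filter (fun i => (c.gkinv i u).isSome)).card

/-- `x` lies on a short cycle (length at most `t`). -/
def cyc (x : α) : Prop := ∃ L, 1 ≤ L ∧ L ≤ c.t ∧ c.gk L x = some x

/-- period of a cyclic point. -/
noncomputable def per (x : α) : ℕ := sInf {L | 1 ≤ L ∧ c.gk L x = some x}

noncomputable def lam (x : α) : ℝ := if c.cyc x then (c.t : ℝ) / (c.per x) else 1

def isStart (x : α) : Prop := ¬ ∃ y, c.g y = some x

/-- the ports visited by the first `k` forward iterates. -/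
noncomputable def QL (x : α) (k : ℕ) : Finset α :=
  ((List.range k).filterMap (fun i => c.gk i x)).toFinset

/-- window of pairs. -/
noncomputable def win (x : α) (k : ℕ) : Finset (Finset α) := (c.QL x k).image c.pOf

/-- pairs of `A` in conflict with a set of pairs `W`. -/
noncomputable def MAof (W : Finset (Finset α)) : Finset (Finset α) :=
  c.A.filter (fun a => ∃ z ∈ a, c.π z ∈ W.biUnion id)

/-- the indexed family of moves. -/
noncomputable def fam : Finset (α ⊕ α × ℕ) :=
  c.PB.image Sum.inl ∪
    ((c.PB.filter (fun x => c.isStart x)) ×ˢ Finset.Ico 1 c.t).image Sum.inr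

noncomputable def Lam : α ⊕ α × ℕ → ℝ := fun i => match i with
  | .inl x => c.lam x
  | .inr _ => 1

noncomputable def MBof : α ⊕ α × ℕ → Finset (Finset α) := fun i => match i with
  | .inl x => c.win x c.t
  | .inr (z, j) => c.win z j

noncomputable def MAmv (i : α ⊕ α × ℕ) : Finset (Finset α) := c.MAof (c.MBof i)


/- ===================  Basic pair lemmas  =================== -/

lemma pOf_eq {e : Finset α} {z : α} (he : e ∈ c.E) (hz : z ∈ e) : c.pOf z = e := by
  have h : ∃ e ∈ c.E, z ∈ e := ⟨e, he, hz⟩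
  rw [pOf, dif_pos h]
  obtain ⟨he', hz'⟩ := h.choose_spec
  by_contra hne
  have hd := c.hEdisj he' he (by exact hne)
  exact (Finset.disjoint_left.mp hd) hz' hz

lemma pOf_spec {z : α} (hz : z ∈ c.S) : c.pOf z ∈ c.E ∧ z ∈ c.pOf z := by
  rw [← c.hES] at hz
  obtain ⟨e, he, hze⟩ := Finset.mem_biUnion.mp hz
  rw [c.pOf_eq he hze]
  exact ⟨he, hze⟩

lemma card_pOf {z : α} (hz : z ∈ c.S) : (c.pOf z).card = 2 :=
  c.hE2 _ (c.pOf_spec hz).1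

lemma oth_spec {z : α} (hz : z ∈ c.S) : c.oth z ∈ c.pOf z ∧ c.oth z ≠ z := by
  have hcard := c.card_pOf hz
  have hzmem := (c.pOf_spec hz).2
  have h : ∃ y ∈ c.pOf z, y ≠ z := by
    have h1 : ((c.pOf z).erase z).Nonempty := by
      rw [← Finset.card_pos, Finset.card_erase_of_mem hzmem, hcard]
      omega
    obtain ⟨y, hy⟩ := h1
    exact ⟨y, Finset.mem_of_mem_erase hy, Finset.ne_of_mem_erase hy⟩
  rw [oth, dif_pos h]
  exact h.choose_spec

lemma pair_eq {z : α} (hz : z ∈ c.S) : c.pOf z = {z, c.oth z} := by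
  have h1 : {z, c.oth z} ⊆ c.pOf z := by
    intro y hy
    rcases Finset.mem_insert.mp hy with rfl | hy
    · exact (c.pOf_spec hz).2
    · rw [Finset.mem_singleton.mp hy]; exact (c.oth_spec hz).1
  refine (Finset.eq_of_subset_of_card_le h1 ?_).symm
  rw [c.card_pOf hz, Finset.card_insert_of_notMem (by
    simp only [Finset.mem_singleton]
    exact fun h => (c.oth_spec hz).2 h.symm), Finset.card_singleton]

lemma mem_pOf_iff {z y : α} (hz : z ∈ c.S) : y ∈ c.pOf z ↔ y = z ∨ y = c.oth z := by
  rw [c.pair_eq hz]; simp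

lemma mem_S_of_mem_pOf {z y : α} (hz : z ∈ c.S) (hy : y ∈ c.pOf z) : y ∈ c.S := by
  rw [← c.hES]
  exact Finset.mem_biUnion.mpr ⟨c.pOf z, (c.pOf_spec hz).1, hy⟩

lemma oth_mem_S {z : α} (hz : z ∈ c.S) : c.oth z ∈ c.S :=
  c.mem_S_of_mem_pOf hz (c.oth_spec hz).1

lemma pOf_oth {z : α} (hz : z ∈ c.S) : c.pOf (c.oth z) = c.pOf z :=
  c.pOf_eq (c.pOf_spec hz).1 (c.oth_spec hz).1

lemma oth_oth {z : α} (hz : z ∈ c.S) : c.oth (c.oth z) = z := by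
  have h1 := c.oth_spec (c.oth_mem_S hz)
  rw [c.pOf_oth hz] at h1
  rcases (c.mem_pOf_iff hz).mp h1.1 with h | h
  · exact h
  · exact absurd h h1.2

lemma oth_inj {z y : α} (hz : z ∈ c.S) (hy : y ∈ c.S) (h : c.oth z = c.oth y) : z = y := by
  rw [← c.oth_oth hz, h, c.oth_oth hy]

lemma oth_eq_of_mem {z y : α} (hz : z ∈ c.S) (hy : y ∈ c.pOf z) (hne : y ≠ z) :
    y = c.oth z := by
  rcases (c.mem_pOf_iff hz).mp hy with h | h
  · exact absurd h hne
  · exact h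

/- ===================  Membership lemmas  =================== -/

lemma mem_PB_iff {x : α} : x ∈ c.PB ↔ ∃ b ∈ c.B \ c.A, x ∈ b := by
  simp [PB, Finset.mem_biUnion]

lemma mem_EA_iff {x : α} : x ∈ c.EA ↔ ∃ a ∈ c.A, x ∈ a := by
  simp [EA, Finset.mem_biUnion]

lemma PB_subset_S : c.PB ⊆ c.S := by
  intro x hx
  obtain ⟨b, hb, hxb⟩ := c.mem_PB_iff.mp hx
  rw [← c.hES]
  exact Finset.mem_biUnion.mpr ⟨b, c.hBE (Finset.mem_sdiff.mp hb).1, hxb⟩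

lemma EA_subset_S : c.EA ⊆ c.S := by
  intro x hx
  obtain ⟨a, ha, hxa⟩ := c.mem_EA_iff.mp hx
  rw [← c.hES]
  exact Finset.mem_biUnion.mpr ⟨a, c.hAE ha, hxa⟩

lemma pOf_mem_BA {x : α} (hx : x ∈ c.PB) : c.pOf x ∈ c.B \ c.A := by
  obtain ⟨b, hb, hxb⟩ := c.mem_PB_iff.mp hx
  rw [c.pOf_eq (c.hBE (Finset.mem_sdiff.mp hb).1) hxb]
  exact hb

lemma pOf_mem_A {x : α} (hx : x ∈ c.EA) : c.pOf x ∈ c.A := by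
  obtain ⟨a, ha, hxa⟩ := c.mem_EA_iff.mp hx
  rw [c.pOf_eq (c.hAE ha) hxa]
  exact ha

lemma oth_mem_PB {x : α} (hx : x ∈ c.PB) : c.oth x ∈ c.PB := by
  have hxS := c.PB_subset_S hx
  exact c.mem_PB_iff.mpr ⟨c.pOf x, c.pOf_mem_BA hx, (c.oth_spec hxS).1⟩

lemma oth_mem_EA {x : α} (hx : x ∈ c.EA) : c.oth x ∈ c.EA := by
  have hxS := c.EA_subset_S hx
  exact c.mem_EA_iff.mpr ⟨c.pOf x, c.pOf_mem_A hx, (c.oth_spec hxS).1⟩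

lemma PB_disj_EA {x : α} (hx : x ∈ c.PB) : x ∉ c.EA := by
  intro hxa
  have h1 := c.pOf_mem_BA hx
  have h2 := c.pOf_mem_A hxa
  exact (Finset.mem_sdiff.mp h1).2 h2

lemma PB_subset_J {x : α} (hx : x ∈ c.PB) : x ∈ c.J := by
  apply c.hBJ
  obtain ⟨b, hb, hxb⟩ := c.mem_PB_iff.mp hx
  simp only [Finset.coe_biUnion, Set.mem_iUnion, Finset.mem_coe]
  exact ⟨b, (Finset.mem_sdiff.mp hb).1, hxb⟩

lemma EA_subset_I {x : α} (hx : x ∈ c.EA) : x ∈ c.I := by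
  apply c.hAI
  obtain ⟨a, ha, hxa⟩ := c.mem_EA_iff.mp hx
  simp only [Finset.coe_biUnion, Set.mem_iUnion, Finset.mem_coe]
  exact ⟨a, ha, hxa⟩

/- ===================  pinv lemmas  =================== -/

lemma pi_pinv {x : α} (hx : x ∈ c.J) : c.π (c.pinv x) = x := by
  haveI : Nonempty α := ⟨x⟩
  have h : ∃ a ∈ c.I, c.π a = x := c.hbij.surjOn hx
  exact Function.invFunOn_eq h

lemma pinv_mem_I {x : α} (hx : x ∈ c.J) : c.pinv x ∈ c.I := by
  haveI : Nonempty α := ⟨x⟩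
  have h : ∃ a ∈ c.I, c.π a = x := c.hbij.surjOn hx
  exact Function.invFunOn_mem h

lemma pinv_pi {z : α} (hz : z ∈ c.I) : c.pinv (c.π z) = z := by
  have h1 : c.π z ∈ c.J := c.hbij.mapsTo hz
  exact c.hbij.injOn (c.pinv_mem_I h1) hz (c.pi_pinv h1)

lemma pinv_eq {z x : α} (hz : z ∈ c.I) (h : c.π z = x) : c.pinv x = z := by
  rw [← h, c.pinv_pi hz]



/- ===================  g lemmas  =================== -/

lemma g_some {x y : α} : c.g x = some y ↔
    (x ∈ c.PB ∧ c.pinv x ∈ c.EA ∧ c.π (c.oth (c.pinv x)) ∈ c.PB ∧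
      y = c.oth (c.π (c.oth (c.pinv x)))) := by
  rw [g]
  split_ifs with h
  · simp only [Option.some_inj]
    constructor
    · rintro rfl; exact ⟨h.1, h.2.1, h.2.2, rfl⟩
    · rintro ⟨_, _, _, rfl⟩; rfl
  · constructor
    · intro he; exact absurd he (by simp)
    · rintro ⟨h1, h2, h3, _⟩; exact absurd ⟨h1, h2, h3⟩ h

lemma g_mem_left {x y : α} (h : c.g x = some y) : x ∈ c.PB := (c.g_some.mp h).1

lemma g_mem_right {x y : α} (h : c.g x = some y) : y ∈ c.PB := by
  obtain ⟨_, _, hq, rfl⟩ := c.g_some.mp h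
  exact c.oth_mem_PB hq

lemma g_oth {x y : α} (h : c.g x = some y) : c.g (c.oth y) = some (c.oth x) := by
  obtain ⟨hx, hp, hq, rfl⟩ := c.g_some.mp h
  have hpS : c.pinv x ∈ c.S := c.EA_subset_S hp
  have hqEA : c.oth (c.pinv x) ∈ c.EA := c.oth_mem_EA hp
  have hqI : c.oth (c.pinv x) ∈ c.I := c.EA_subset_I hqEA
  have hπqS : c.π (c.oth (c.pinv x)) ∈ c.S := c.PB_subset_S hq
  have h1 : c.oth (c.oth (c.π (c.oth (c.pinv x)))) = c.π (c.oth (c.pinv x)) := c.oth_oth hπqS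
  have h2 : c.pinv (c.π (c.oth (c.pinv x))) = c.oth (c.pinv x) := c.pinv_pi hqI
  have h3 : c.oth (c.oth (c.pinv x)) = c.pinv x := c.oth_oth hpS
  have h4 : c.π (c.pinv x) = x := c.pi_pinv (c.PB_subset_J hx)
  rw [h1]
  refine c.g_some.mpr ?_
  rw [h2, h3, h4]
  exact ⟨hq, hqEA, hx, rfl⟩

lemma g_inj {x₁ x₂ y : α} (h₁ : c.g x₁ = some y) (h₂ : c.g x₂ = some y) : x₁ = x₂ := by
  obtain ⟨ha1, hb1, hc1, he1⟩ := c.g_some.mp h₁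
  obtain ⟨ha2, hb2, hc2, he2⟩ := c.g_some.mp h₂
  have hS1 : c.π (c.oth (c.pinv x₁)) ∈ c.S := c.PB_subset_S hc1
  have hS2 : c.π (c.oth (c.pinv x₂)) ∈ c.S := c.PB_subset_S hc2
  have hππ : c.π (c.oth (c.pinv x₁)) = c.π (c.oth (c.pinv x₂)) :=
    c.oth_inj hS1 hS2 (by rw [← he1, ← he2])
  have hI1 : c.oth (c.pinv x₁) ∈ c.I := c.EA_subset_I (c.oth_mem_EA hb1)
  have hI2 : c.oth (c.pinv x₂) ∈ c.I := c.EA_subset_I (c.oth_mem_EA hb2)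
  have hqq : c.oth (c.pinv x₁) = c.oth (c.pinv x₂) := c.hbij.injOn hI1 hI2 hππ
  have hpp : c.pinv x₁ = c.pinv x₂ :=
    c.oth_inj (c.EA_subset_S hb1) (c.EA_subset_S hb2) hqq
  rw [← c.pi_pinv (c.PB_subset_J ha1), ← c.pi_pinv (c.PB_subset_J ha2), hpp]

lemma ginv_some {x y : α} : c.ginv y = some x ↔ c.g x = some y := by
  rw [ginv]
  split_ifs with h
  · simp only [Option.some_inj]
    constructor
    · rintro rfl; exact h.choose_spec
    · intro hg; exact c.g_inj h.choose_spec hg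
  · constructor
    · intro he; exact absurd he (by simp)
    · intro hg; exact absurd ⟨x, hg⟩ h

/- ===================  iterate lemmas  =================== -/

lemma gk_zero (x : α) : c.gk 0 x = some x := rfl

lemma gk_succ (i : ℕ) (x : α) : c.gk (i + 1) x = (c.g x).bind (c.gk i) := rfl

lemma gk_one (x : α) : c.gk 1 x = c.g x := by
  rw [gk_succ]
  cases hgx : c.g x <;> simp [gk_zero]

lemma gk_add (i j : ℕ) (x : α) : c.gk (i + j) x = (c.gk j x).bind (c.gk i) := by
  induction j generalizing x with
  | zero => simp [gk_zero]
  | succ j IH =>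
    have h1 : i + (j + 1) = (i + j) + 1 := by omega
    rw [h1, gk_succ, gk_succ]
    rw [Option.bind_assoc]
    cases hgx : c.g x with
    | none => simp
    | some z => simp only [Option.bind_some]; exact IH z

lemma gk_succ' (i : ℕ) (x : α) : c.gk (i + 1) x = (c.gk i x).bind c.g := by
  have h1 : i + 1 = 1 + i := by omega
  rw [h1, c.gk_add 1 i]
  cases h : c.gk i x with
  | none => simp
  | some z => simp only [Option.bind_some]; exact c.gk_one z

lemma gk_some_succ {i : ℕ} {x y : α} (h : c.gk (i + 1) x = some y) :
    ∃ z, c.g x = some z ∧ c.gk i z = some y := by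
  rw [gk_succ] at h
  cases hgx : c.g x with
  | none => rw [hgx] at h; simp at h
  | some z => rw [hgx] at h; exact ⟨z, rfl, h⟩

lemma gk_some_succ' {i : ℕ} {x y : α} (h : c.gk (i + 1) x = some y) :
    ∃ z, c.gk i x = some z ∧ c.g z = some y := by
  rw [gk_succ'] at h
  cases hgx : c.gk i x with
  | none => rw [hgx] at h; simp at h
  | some z => rw [hgx] at h; exact ⟨z, rfl, h⟩

lemma gk_isSome_of_le {i j : ℕ} {x : α} (hle : j ≤ i) (h : (c.gk i x).isSome) :
    (c.gk j x).isSome := by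
  obtain ⟨d, rfl⟩ : ∃ d, i = d + j := ⟨i - j, by omega⟩
  rw [c.gk_add d j] at h
  cases hj : c.gk j x with
  | none => rw [hj] at h; simp at h
  | some z => simp

lemma gk_trans {i j : ℕ} {x u v : α} (hu : c.gk i x = some u) (huv : c.gk j u = some v) :
    c.gk (j + i) x = some v := by
  rw [c.gk_add j i, hu, Option.bind_some, huv]

lemma gk_mem_PB {i : ℕ} {x u : α} (hx : x ∈ c.PB) (h : c.gk i x = some u) : u ∈ c.PB := by
  induction i generalizing x with
  | zero => rw [gk_zero] at h; exact Option.some_inj.mp h ▸ hx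
  | succ i IH =>
    obtain ⟨z, hz, hzu⟩ := c.gk_some_succ h
    exact IH (c.g_mem_right hz) hzu

lemma gkinv_zero (x : α) : c.gkinv 0 x = some x := rfl

lemma gkinv_succ (i : ℕ) (x : α) : c.gkinv (i + 1) x = (c.ginv x).bind (c.gkinv i) := rfl

lemma gk_iff_gkinv {i : ℕ} {x y : α} : c.gk i x = some y ↔ c.gkinv i y = some x := by
  induction i generalizing x y with
  | zero =>
    rw [gk_zero, gkinv_zero]
    simp [eq_comm]
  | succ i IH =>
    constructor
    · intro h
      obtain ⟨z, hz, hzy⟩ := c.gk_some_succ' h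
      rw [gkinv_succ, c.ginv_some.mpr hzy, Option.bind_some]
      exact IH.mp hz
    · intro h
      rw [gkinv_succ] at h
      cases hgy : c.ginv y with
      | none => rw [hgy] at h; simp at h
      | some z =>
        rw [hgy, Option.bind_some] at h
        have h1 : c.g z = some y := c.ginv_some.mp hgy
        have h2 : c.gk i x = some z := IH.mpr h
        rw [gk_succ', h2, Option.bind_some, h1]

lemma gkinv_isSome_of_le {i j : ℕ} {x : α} (hle : j ≤ i) (h : (c.gkinv i x).isSome) :
    (c.gkinv j x).isSome := by
  obtain ⟨u, hu⟩ := Option.isSome_iff_exists.mp h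
  have h1 : c.gk i u = some x := c.gk_iff_gkinv.mpr hu
  obtain ⟨d, rfl⟩ : ∃ d, i = j + d := ⟨i - j, by omega⟩
  rw [c.gk_add j d] at h1
  cases hj : c.gk d u with
  | none => rw [hj] at h1; simp at h1
  | some z =>
    rw [hj, Option.bind_some] at h1
    rw [c.gk_iff_gkinv.mp h1]
    simp

/- ===================  no palindrome  =================== -/

lemma no_palindrome : ∀ m : ℕ, ∀ x : α, x ∈ c.PB → c.gk m x = some (c.oth x) → False := by
  intro m
  induction m using Nat.strong_induction_on with
  | _ m IH =>
    intro x hx h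
    match m with
    | 0 =>
      rw [gk_zero] at h
      exact (c.oth_spec (c.PB_subset_S hx)).2 (Option.some_inj.mp h).symm
    | 1 =>
      rw [gk_one] at h
      obtain ⟨_, hp, hq, he⟩ := c.g_some.mp h
      have hS1 : x ∈ c.S := c.PB_subset_S hx
      have hS2 : c.π (c.oth (c.pinv x)) ∈ c.S := c.PB_subset_S hq
      have h1 : x = c.π (c.oth (c.pinv x)) := c.oth_inj hS1 hS2 he
      have h2 : x = c.π (c.pinv x) := (c.pi_pinv (c.PB_subset_J hx)).symm
      have hI1 : c.oth (c.pinv x) ∈ c.I := c.EA_subset_I (c.oth_mem_EA hp)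
      have hI2 : c.pinv x ∈ c.I := c.EA_subset_I hp
      have h3 : c.oth (c.pinv x) = c.pinv x := c.hbij.injOn hI1 hI2 (by rw [← h1, ← h2])
      exact (c.oth_spec (c.EA_subset_S hp)).2 h3
    | (m + 2) =>
      obtain ⟨x', hgx, hrest⟩ := c.gk_some_succ (show c.gk ((m + 1) + 1) x = some (c.oth x) from h)
      obtain ⟨u, hu, hu2⟩ := c.gk_some_succ' hrest
      have hkey : c.g (c.oth x') = some (c.oth x) := c.g_oth hgx
      have huo : u = c.oth x' := c.g_inj hu2 hkey
      subst huo
      exact IH m (by omega) x' (c.g_mem_right hgx) hu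

lemma gk_ne_oth {i j : ℕ} {x u v : α} (hx : x ∈ c.PB) (hiu : c.gk i x = some u)
    (hjv : c.gk j x = some v) : v ≠ c.oth u := by
  intro hvo
  have huPB := c.gk_mem_PB hx hiu
  have hvPB := c.gk_mem_PB hx hjv
  rcases le_total i j with hle | hle
  · obtain ⟨d, rfl⟩ : ∃ d, j = d + i := ⟨j - i, by omega⟩
    rw [c.gk_add d i, hiu, Option.bind_some] at hjv
    exact c.no_palindrome d u huPB (hvo ▸ hjv)
  · obtain ⟨d, rfl⟩ : ∃ d, i = d + j := ⟨i - j, by omega⟩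
    rw [c.gk_add d j, hjv, Option.bind_some] at hiu
    have huv : u = c.oth v := by
      rw [hvo, c.oth_oth (c.PB_subset_S huPB)]
    exact c.no_palindrome d v hvPB (huv ▸ hiu)



/- ===================  window lemmas  =================== -/

lemma mem_QL {x u : α} {k : ℕ} : u ∈ c.QL x k ↔ ∃ i < k, c.gk i x = some u := by
  simp only [QL, List.mem_toFinset, List.mem_filterMap, List.mem_range]

lemma QL_card {x : α} {k : ℕ} : (c.QL x k).card ≤ k := by
  calc (c.QL x k).card ≤ ((List.range k).filterMap (fun i => c.gk i x)).length :=
        List.toFinset_card_le _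
    _ ≤ (List.range k).length := List.length_filterMap_le _ _
    _ = k := List.length_range

lemma self_mem_QL {x : α} {k : ℕ} (hk : 1 ≤ k) : x ∈ c.QL x k :=
  c.mem_QL.mpr ⟨0, by omega, c.gk_zero x⟩

lemma QL_subset_PB {x : α} {k : ℕ} (hx : x ∈ c.PB) : c.QL x k ⊆ c.PB := by
  intro u hu
  obtain ⟨i, _, hgi⟩ := c.mem_QL.mp hu
  exact c.gk_mem_PB hx hgi

lemma mem_win {x b : α → α} : True := trivial

lemma mem_win_iff {x : α} {k : ℕ} {b : Finset α} :
    b ∈ c.win x k ↔ ∃ u ∈ c.QL x k, c.pOf u = b := by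
  simp only [win, Finset.mem_image]

lemma win_subset_BA {x : α} {k : ℕ} (hx : x ∈ c.PB) : c.win x k ⊆ c.B \ c.A := by
  intro b hb
  obtain ⟨u, hu, rfl⟩ := c.mem_win_iff.mp hb
  exact c.pOf_mem_BA (c.QL_subset_PB hx hu)

lemma win_card {x : α} {k : ℕ} : (c.win x k).card ≤ k :=
  le_trans (Finset.card_image_le) c.QL_card

lemma biUnion_win_subset_PB {x : α} {k : ℕ} (hx : x ∈ c.PB) {z : α}
    (hz : z ∈ (c.win x k).biUnion id) : z ∈ c.PB := by
  obtain ⟨b, hb, hzb⟩ := Finset.mem_biUnion.mp hz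
  obtain ⟨u, hu, rfl⟩ := c.mem_win_iff.mp hb
  have huPB := c.QL_subset_PB hx hu
  have huS := c.PB_subset_S huPB
  rcases (c.mem_pOf_iff huS).mp hzb with rfl | h
  · exact huPB
  · rw [h]; exact c.oth_mem_PB huPB

/- ===================  conflict-set lemmas  =================== -/

lemma MAof_subset_A {W : Finset (Finset α)} : c.MAof W ⊆ c.A := Finset.filter_subset _ _

lemma mem_MAof {W : Finset (Finset α)} {a : Finset α} :
    a ∈ c.MAof W ↔ a ∈ c.A ∧ ∃ z ∈ a, c.π z ∈ W.biUnion id := by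
  simp only [MAof, Finset.mem_filter]

lemma MAof_subset_AB {W : Finset (Finset α)} (hW : W ⊆ c.B \ c.A) :
    c.MAof W ⊆ c.A \ c.B := by
  intro a ha
  obtain ⟨haA, z, hza, hπz⟩ := c.mem_MAof.mp ha
  rw [Finset.mem_sdiff]
  refine ⟨haA, fun haB => ?_⟩
  have hzEA : z ∈ c.EA := c.mem_EA_iff.mpr ⟨a, haA, hza⟩
  have hzI : z ∈ c.I := c.EA_subset_I hzEA
  have hzJ : z ∈ c.J := by
    apply c.hBJ
    simp only [Finset.coe_biUnion, Set.mem_iUnion, Finset.mem_coe]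
    exact ⟨a, haB, hza⟩
  have hfixz : c.π z = z := c.hfix z ⟨hzI, hzJ⟩
  rw [hfixz] at hπz
  obtain ⟨b, hb, hzb⟩ := Finset.mem_biUnion.mp hπz
  have hzPB : z ∈ c.PB := c.mem_PB_iff.mpr ⟨b, hW hb, hzb⟩
  exact c.PB_disj_EA hzPB hzEA

lemma MAof_win_card {x : α} {k : ℕ} (hx : x ∈ c.PB) :
    (c.MAof (c.win x k)).card ≤ k + 1 := by
  have hsub : c.MAof (c.win x k) ⊆
      ((c.QL x k) ∪ {c.oth x}).image (fun u => c.pOf (c.pinv u)) := by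
    intro a ha
    obtain ⟨haA, z, hza, hπz⟩ := c.mem_MAof.mp ha
    obtain ⟨b, hb, hπzb⟩ := Finset.mem_biUnion.mp hπz
    obtain ⟨u, huQL, rfl⟩ := c.mem_win_iff.mp hb
    obtain ⟨i, hik, hgi⟩ := c.mem_QL.mp huQL
    have huPB : u ∈ c.PB := c.gk_mem_PB hx hgi
    have huS : u ∈ c.S := c.PB_subset_S huPB
    have hzEA : z ∈ c.EA := c.mem_EA_iff.mpr ⟨a, haA, hza⟩
    have hzI : z ∈ c.I := c.EA_subset_I hzEA
    have haz : c.pOf z = a := c.pOf_eq (c.hAE haA) hza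
    rcases (c.mem_pOf_iff huS).mp hπzb with hπu | hπo
    · -- π z = u
      refine Finset.mem_image.mpr ⟨u, Finset.mem_union_left _ huQL, ?_⟩
      rw [c.pinv_eq hzI hπu, haz]
    · -- π z = oth u
      rcases Nat.eq_zero_or_pos i with rfl | hipos
      · -- u = x
        have hux : u = x := Option.some_inj.mp (c.gk_zero x ▸ hgi).symm
        refine Finset.mem_image.mpr ⟨c.oth x, Finset.mem_union_right _ (by simp), ?_⟩
        rw [c.pinv_eq hzI (hux ▸ hπo), haz]
      · -- intermediate: u = g y for y at index i-1
        obtain ⟨j, rfl⟩ : ∃ j, i = j + 1 := ⟨i - 1, by omega⟩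
        obtain ⟨y, hgy, hgyu⟩ := c.gk_some_succ' hgi
        obtain ⟨hyPB, hpy, hqy, hue⟩ := c.g_some.mp hgyu
        -- u = oth (π (oth (pinv y))) so oth u = π (oth (pinv y))
        have hW : c.π (c.oth (c.pinv y)) ∈ c.S := c.PB_subset_S hqy
        have hothu : c.oth u = c.π (c.oth (c.pinv y)) := by
          rw [hue, c.oth_oth hW]
        have hoI : c.oth (c.pinv y) ∈ c.I := c.EA_subset_I (c.oth_mem_EA hpy)
        have hzeq : z = c.oth (c.pinv y) := by
          apply c.hbij.injOn hzI hoI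
          rw [hπo, hothu]
        refine Finset.mem_image.mpr ⟨y, Finset.mem_union_left _
          (c.mem_QL.mpr ⟨j, by omega, hgy⟩), ?_⟩
        rw [← haz, hzeq, c.pOf_oth (c.EA_subset_S hpy)]
  calc (c.MAof (c.win x k)).card ≤ ((c.QL x k) ∪ {c.oth x}).card :=
        le_trans (Finset.card_le_card hsub) Finset.card_image_le
    _ ≤ (c.QL x k).card + 1 := le_trans (Finset.card_union_le _ _) (by simp)
    _ ≤ k + 1 := by have := c.QL_card (x := x) (k := k); omega

/- ===================  feasibility  =================== -/

lemma symmDiff_eq {W Ab : Finset (Finset α)} (hAb : Ab ⊆ c.A) (hW : ∀ b ∈ W, b ∉ c.A) :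
    symmDiff c.A (Ab ∪ W) = (c.A \ Ab) ∪ W := by
  ext b
  have h1 := @hAb b
  have h2 := hW b
  rw [Finset.mem_symmDiff]
  simp only [Finset.mem_union, Finset.mem_sdiff]
  tauto

lemma feas {W : Finset (Finset α)} (hW : W ⊆ c.B \ c.A) :
    FeasibleSet c.M (symmDiff c.A (c.MAof W ∪ W)) := by
  have hWA : ∀ b ∈ W, b ∉ c.A := fun b hb => (Finset.mem_sdiff.mp (hW hb)).2
  rw [c.symmDiff_eq c.MAof_subset_A hWA]
  set K : Set α := {z | z ∈ c.I ∧ c.π z ∈ (W.biUnion id : Finset α)} with hKdef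
  have hKI : K ⊆ c.I := fun z hz => hz.1
  have hbase := c.hexch K hKI
  show c.M.Indep _
  apply Matroid.Indep.subset hbase.indep
  intro z hz
  simp only [Finset.coe_biUnion, Set.mem_iUnion, Finset.mem_coe] at hz
  obtain ⟨e, he, hze⟩ := hz
  rcases Finset.mem_union.mp he with heA | heW
  · -- z covered by A \ MAof W : it is in I \ K
    rw [Finset.mem_sdiff] at heA
    right
    have hzEA : z ∈ c.EA := c.mem_EA_iff.mpr ⟨e, heA.1, hze⟩
    refine ⟨c.EA_subset_I hzEA, fun hzK => ?_⟩
    exact heA.2 (c.mem_MAof.mpr ⟨heA.1, z, hze, hzK.2⟩)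
  · -- z covered by W : it is π of a K element
    left
    have hzJ : z ∈ c.J := by
      apply c.hBJ
      simp only [Finset.coe_biUnion, Set.mem_iUnion, Finset.mem_coe]
      exact ⟨e, (Finset.mem_sdiff.mp (hW heW)).1, hze⟩
    have hzW : z ∈ W.biUnion id := Finset.mem_biUnion.mpr ⟨e, heW, hze⟩
    exact ⟨c.pinv z, ⟨c.pinv_mem_I hzJ, by rw [c.pi_pinv hzJ]; exact hzW⟩, c.pi_pinv hzJ⟩

/- ===================  fam membership  =================== -/

lemma mem_fam {i : α ⊕ α × ℕ} : i ∈ c.fam ↔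
    (∃ x ∈ c.PB, i = Sum.inl x) ∨
    (∃ z ∈ c.PB, c.isStart z ∧ ∃ j, 1 ≤ j ∧ j < c.t ∧ i = Sum.inr (z, j)) := by
  simp only [fam, Finset.mem_union, Finset.mem_image, Finset.mem_product, Finset.mem_filter,
    Finset.mem_Ico]
  constructor
  · rintro (⟨x, hx, rfl⟩ | ⟨⟨z, j⟩, ⟨⟨hz, hst⟩, hj⟩, rfl⟩)
    · exact Or.inl ⟨x, hx, rfl⟩
    · exact Or.inr ⟨z, hz, hst, j, hj.1, hj.2, rfl⟩
  · rintro (⟨x, hx, rfl⟩ | ⟨z, hz, hst, j, hj1, hj2, rfl⟩)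
    · exact Or.inl ⟨x, hx, rfl⟩
    · exact Or.inr ⟨⟨z, j⟩, ⟨⟨hz, hst⟩, hj1, hj2⟩, rfl⟩



/- ===================  more iterate lemmas  =================== -/

lemma gk_inj {i : ℕ} {x₁ x₂ y : α} (h₁ : c.gk i x₁ = some y) (h₂ : c.gk i x₂ = some y) :
    x₁ = x₂ := by
  induction i generalizing y with
  | zero =>
    rw [gk_zero] at h₁ h₂
    exact (Option.some_inj.mp h₁).trans (Option.some_inj.mp h₂).symm
  | succ i IH =>
    obtain ⟨z₁, hz₁, hg₁⟩ := c.gk_some_succ' h₁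
    obtain ⟨z₂, hz₂, hg₂⟩ := c.gk_some_succ' h₂
    have : z₁ = z₂ := c.g_inj hg₁ hg₂
    subst this
    exact IH hz₁ hz₂

lemma gkinv_add (i j : ℕ) (x : α) : c.gkinv (i + j) x = (c.gkinv j x).bind (c.gkinv i) := by
  induction j generalizing x with
  | zero => simp [gkinv_zero]
  | succ j IH =>
    have h1 : i + (j + 1) = (i + j) + 1 := by omega
    rw [h1, gkinv_succ, gkinv_succ]
    rw [Option.bind_assoc]
    cases hgx : c.ginv x with
    | none => simp
    | some z => simp only [Option.bind_some]; exact IH z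

lemma gkinv_succ' (i : ℕ) (x : α) : c.gkinv (i + 1) x = (c.gkinv i x).bind c.ginv := by
  have h1 : i + 1 = 1 + i := by omega
  rw [h1, c.gkinv_add 1 i]
  cases h : c.gkinv i x with
  | none => simp
  | some z =>
    simp only [Option.bind_some]
    rw [gkinv_succ]
    cases hz : c.ginv z <;> simp [gkinv_zero]

lemma gk_oth {i : ℕ} {x y : α} (h : c.gk i x = some y) :
    c.gk i (c.oth y) = some (c.oth x) := by
  induction i generalizing x y with
  | zero =>
    rw [gk_zero] at h
    rw [← Option.some_inj.mp h, gk_zero]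
  | succ i IH =>
    obtain ⟨z, hz, hg⟩ := c.gk_some_succ' h
    have h1 : c.g (c.oth y) = some (c.oth z) := c.g_oth hg
    have h2 : c.gk i (c.oth z) = some (c.oth x) := IH hz
    rw [gk_succ, h1, Option.bind_some, h2]

/- ===================  cycle lemmas  =================== -/

lemma per_spec {x : α} (hx : c.cyc x) :
    1 ≤ c.per x ∧ c.per x ≤ c.t ∧ c.gk (c.per x) x = some x := by
  obtain ⟨L, hL1, hLt, hgk⟩ := hx
  have hne : {L | 1 ≤ L ∧ c.gk L x = some x}.Nonempty := ⟨L, hL1, hgk⟩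
  have hmem := Nat.sInf_mem hne
  have hle : c.per x ≤ L := Nat.sInf_le ⟨hL1, hgk⟩
  exact ⟨hmem.1, le_trans hle hLt, hmem.2⟩

lemma per_min {x : α} {j : ℕ} (hj1 : 1 ≤ j) (hj2 : j < c.per x) :
    ¬ c.gk j x = some x := by
  intro h
  exact Nat.notMem_of_lt_sInf hj2 ⟨hj1, h⟩

lemma gk_per_add {x : α} (hx : c.cyc x) (s : ℕ) : c.gk (s + c.per x) x = c.gk s x := by
  rw [c.gk_add s (c.per x), (c.per_spec hx).2.2, Option.bind_some]

lemma gk_mod {x : α} (hx : c.cyc x) (i : ℕ) : c.gk i x = c.gk (i % c.per x) x := by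
  induction i using Nat.strong_induction_on with
  | _ i IH =>
    by_cases hlt : i < c.per x
    · rw [Nat.mod_eq_of_lt hlt]
    · have hper1 := (c.per_spec hx).1
      obtain ⟨s, rfl⟩ : ∃ s, i = s + c.per x := ⟨i - c.per x, by omega⟩
      rw [c.gk_per_add hx s]
      rw [IH s (by omega)]
      congr 1
      exact (Nat.add_mod_right s _).symm

lemma gk_cyc_isSome {x : α} (hx : c.cyc x) (i : ℕ) : (c.gk i x).isSome := by
  rw [c.gk_mod hx i]
  have hper1 := (c.per_spec hx).1
  have h1 : i % c.per x ≤ c.per x := le_of_lt (Nat.mod_lt _ (by omega))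
  exact c.gk_isSome_of_le h1 (by rw [(c.per_spec hx).2.2]; simp)

lemma cyc_fwd {x y : α} (hx : c.cyc x) {i : ℕ} (h : c.gk i x = some y) : c.cyc y := by
  have h1 : c.gk (c.per x) y = some y := by
    have ha : c.gk (i + c.per x) x = some y := by
      rw [c.gk_add i (c.per x), (c.per_spec hx).2.2, Option.bind_some, h]
    have hb : c.gk (c.per x + i) x = (c.gk i x).bind (c.gk (c.per x)) := c.gk_add _ _ _
    rw [Nat.add_comm, ha] at hb
    rw [h, Option.bind_some] at hb
    exact hb.symm
  exact ⟨c.per x, (c.per_spec hx).1, (c.per_spec hx).2.1, h1⟩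

lemma cyc_bwd_step {z w : α} (h : c.g z = some w) (hw : c.cyc w) : c.cyc z := by
  have hper1 := (c.per_spec hw).1
  obtain ⟨L, hL⟩ : ∃ L, c.per w = L + 1 := ⟨c.per w - 1, by omega⟩
  have h2 := (c.per_spec hw).2.2
  rw [hL] at h2
  obtain ⟨w', hw', hgw'⟩ := c.gk_some_succ' h2
  have hzw' : z = w' := c.g_inj h hgw'
  subst hzw'
  exact c.cyc_fwd hw hw'

lemma cyc_bwd {z x : α} {i : ℕ} (h : c.gk i z = some x) (hx : c.cyc x) : c.cyc z := by
  induction i generalizing z with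
  | zero => rw [gk_zero] at h; rwa [Option.some_inj.mp h]
  | succ i IH =>
    obtain ⟨w, hw, hrest⟩ := c.gk_some_succ h
    exact c.cyc_bwd_step hw (IH hrest)

lemma per_eq_of_reach {z x : α} {r : ℕ} (hz : c.cyc z) (h : c.gk r z = some x) :
    c.per x = c.per z := by
  have hx : c.cyc x := c.cyc_fwd hz h
  have h1 : c.gk (c.per z) x = some x := by
    calc c.gk (c.per z) x = (c.gk r z).bind (c.gk (c.per z)) := by rw [h, Option.bind_some]
      _ = c.gk (c.per z + r) z := (c.gk_add _ _ _).symm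
      _ = c.gk (r + c.per z) z := by rw [Nat.add_comm]
      _ = (c.gk (c.per z) z).bind (c.gk r) := c.gk_add _ _ _
      _ = c.gk r z := by rw [(c.per_spec hz).2.2, Option.bind_some]
      _ = some x := h
  have hle1 : c.per x ≤ c.per z := Nat.sInf_le ⟨(c.per_spec hz).1, h1⟩
  have h2 : c.gk (c.per x) z = some z := by
    have ha : c.gk (c.per x + r) z = some x := by
      rw [c.gk_add (c.per x) r, h, Option.bind_some, (c.per_spec hx).2.2]
    have hb : c.gk (r + c.per x) z = (c.gk (c.per x) z).bind (c.gk r) := c.gk_add _ _ _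
    rw [Nat.add_comm r (c.per x), ha] at hb
    cases hc : c.gk (c.per x) z with
    | none => rw [hc] at hb; simp at hb
    | some w =>
      rw [hc, Option.bind_some] at hb
      have hwz : w = z := c.gk_inj hb.symm h
      rw [hwz]
  have hle2 : c.per z ≤ c.per x := Nat.sInf_le ⟨(c.per_spec hx).1, h2⟩
  omega

lemma reach_back {x y : α} {i : ℕ} (hx : c.cyc x) (h : c.gk i x = some y) :
    ∃ i' < c.per x, c.gk i' y = some x := by
  have hper1 := (c.per_spec hx).1
  have hr : c.gk (i % c.per x) x = some y := by rw [← c.gk_mod hx i]; exact h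
  rcases Nat.eq_zero_or_pos (i % c.per x) with hr0 | hrpos
  · rw [hr0, gk_zero] at hr
    rw [← Option.some_inj.mp hr]
    exact ⟨0, by omega, c.gk_zero x⟩
  · have hrlt : i % c.per x < c.per x := Nat.mod_lt _ (by omega)
    refine ⟨c.per x - i % c.per x, by omega, ?_⟩
    have hsum : c.gk ((c.per x - i % c.per x) + i % c.per x) x = some x := by
      rw [Nat.sub_add_cancel (le_of_lt hrlt)]
      exact (c.per_spec hx).2.2
    rw [c.gk_add (c.per x - i % c.per x) (i % c.per x), hr, Option.bind_some] at hsum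
    exact hsum

/- ===================  lam lemmas  =================== -/

lemma lam_nonneg' (x : α) : 0 ≤ c.lam x := by
  rw [lam]
  split_ifs with h
  · positivity
  · norm_num

lemma lam_nonneg : ∀ i ∈ c.fam, 0 ≤ c.Lam i := by
  intro i _
  match i with
  | .inl x => exact c.lam_nonneg' x
  | .inr p => norm_num [Lam]

lemma lam_le_t (x : α) : c.lam x ≤ (c.t : ℝ) := by
  have ht1 : (1:ℝ) ≤ (c.t : ℝ) := by exact_mod_cast c.ht
  rw [lam]
  split_ifs with h
  · have hper1 := (c.per_spec h).1
    have : (1:ℝ) ≤ (c.per x : ℝ) := by exact_mod_cast hper1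
    calc (c.t : ℝ) / (c.per x : ℝ) ≤ (c.t : ℝ) / 1 := by
          apply div_le_div_of_nonneg_left (by positivity) (by norm_num) this
      _ = (c.t : ℝ) := by norm_num
  · exact ht1

lemma not_start_of_cyc {x : α} (hx : c.cyc x) : ¬ c.isStart x := by
  rw [isStart]
  push_neg
  have h1 : c.gkinv (c.per x) x = some x := c.gk_iff_gkinv.mp (c.per_spec hx).2.2
  have h2 : (c.gkinv 1 x).isSome := c.gkinv_isSome_of_le (c.per_spec hx).1 (by rw [h1]; simp)
  obtain ⟨y, hy⟩ := Option.isSome_iff_exists.mp h2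
  have h3 : c.gkinv 1 x = (c.ginv x).bind (c.gkinv 0) := rfl
  rw [h3] at hy
  cases hgi : c.ginv x with
  | none => rw [hgi] at hy; simp at hy
  | some z =>
    exact ⟨z, c.ginv_some.mp hgi⟩

/- ===================  sum over fam  =================== -/

lemma sum_fam (f : α ⊕ α × ℕ → ℝ) :
    ∑ i ∈ c.fam, f i = (∑ x ∈ c.PB, f (Sum.inl x)) +
      ∑ p ∈ (c.PB.filter (fun x => c.isStart x)) ×ˢ Finset.Ico 1 c.t, f (Sum.inr p) := by
  rw [fam, Finset.sum_union, Finset.sum_image (fun _ _ _ _ h => Sum.inl.inj h),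
    Finset.sum_image (fun _ _ _ _ h => Sum.inr.inj h)]
  rw [Finset.disjoint_left]
  rintro i hi1 hi2
  obtain ⟨x, _, rfl⟩ := Finset.mem_image.mp hi1
  obtain ⟨p, _, hpe⟩ := Finset.mem_image.mp hi2
  exact absurd hpe (by simp)

lemma PB_card : c.PB.card = 2 * (c.B \ c.A).card := by
  rw [PB, Finset.card_biUnion]
  · have h1 : ∀ b ∈ c.B \ c.A, (id b).card = 2 :=
      fun b hb => c.hE2 b (c.hBE (Finset.mem_sdiff.mp hb).1)
    rw [Finset.sum_congr rfl h1, Finset.sum_const, smul_eq_mul, Nat.mul_comm]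
  · intro b hb b' hb' hne
    exact c.hEdisj (by exact_mod_cast c.hBE (Finset.mem_sdiff.mp hb).1)
      (by exact_mod_cast c.hBE (Finset.mem_sdiff.mp hb').1) hne

lemma fam_mass : ∑ i ∈ c.fam, c.Lam i ≤ 2 * (c.t : ℝ) * ((c.B \ c.A).card) := by
  rw [c.sum_fam]
  have h2 : ∑ p ∈ (c.PB.filter (fun x => c.isStart x)) ×ˢ Finset.Ico 1 c.t,
      c.Lam (Sum.inr p) = ∑ x ∈ c.PB, (if c.isStart x then ((c.t : ℝ) - 1) else 0) := by
    have ha : ∀ p ∈ (c.PB.filter (fun x => c.isStart x)) ×ˢ Finset.Ico 1 c.t,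
        c.Lam (Sum.inr p) = 1 := fun p _ => rfl
    rw [Finset.sum_congr rfl ha, Finset.sum_const, Finset.card_product, Nat.card_Ico,
      ← Finset.sum_filter]
    have hb : ∀ x ∈ c.PB.filter (fun x => c.isStart x), ((c.t : ℝ) - 1) = ((c.t - 1 : ℕ) : ℝ) := by
      intro x _
      have := c.ht
      push_cast [Nat.cast_sub c.ht]
      ring
    rw [Finset.sum_congr rfl hb, Finset.sum_const]
    push_cast
    ring
  rw [h2, ← Finset.sum_add_distrib]
  have hpt : ∀ x ∈ c.PB, c.Lam (Sum.inl x) + (if c.isStart x then ((c.t : ℝ) - 1) else 0)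
      ≤ (c.t : ℝ) := by
    intro x _
    have hlam : c.Lam (Sum.inl x) = c.lam x := rfl
    rw [hlam]
    split_ifs with hst
    · -- a start is not cyclic
      have hnc : ¬ c.cyc x := fun hc => c.not_start_of_cyc hc hst
      rw [lam, if_neg hnc]
      ring_nf
      exact le_refl _
    · have := c.lam_le_t x
      linarith
  calc ∑ x ∈ c.PB, (c.Lam (Sum.inl x) + (if c.isStart x then ((c.t : ℝ) - 1) else 0))
      ≤ ∑ _x ∈ c.PB, (c.t : ℝ) := Finset.sum_le_sum hpt
    _ = (c.PB.card : ℝ) * (c.t : ℝ) := by rw [Finset.sum_const]; push_cast; ring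
    _ = 2 * (c.t : ℝ) * ((c.B \ c.A).card) := by rw [c.PB_card]; push_cast; ring



/- ===================  coverage: lower bound  =================== -/

lemma gk_mem_PB_rev {i : ℕ} {y u : α} (hu : u ∈ c.PB) (h : c.gk i y = some u) : y ∈ c.PB := by
  cases i with
  | zero => rw [gk_zero] at h; rwa [Option.some_inj.mp h]
  | succ i =>
    obtain ⟨z, hz, _⟩ := c.gk_some_succ h
    exact c.g_mem_left hz

lemma win_mem_split {q x : α} {k : ℕ} (hq : q ∈ c.PB) (hx : x ∈ c.PB) :
    c.pOf q ∈ c.win x k ↔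
      ((∃ i < k, c.gk i x = some q) ∨ (∃ i < k, c.gk i x = some (c.oth q))) := by
  have hqS : q ∈ c.S := c.PB_subset_S hq
  constructor
  · intro h
    obtain ⟨u, huQL, hupof⟩ := c.mem_win_iff.mp h
    obtain ⟨i, hik, hgi⟩ := c.mem_QL.mp huQL
    have huPB : u ∈ c.PB := c.gk_mem_PB hx hgi
    have huS : u ∈ c.S := c.PB_subset_S huPB
    have humem : u ∈ c.pOf q := by rw [← hupof]; exact (c.pOf_spec huS).2
    rcases (c.mem_pOf_iff hqS).mp humem with rfl | h2
    · exact Or.inl ⟨i, hik, hgi⟩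
    · exact Or.inr ⟨i, hik, by rw [← h2]; exact hgi⟩
  · rintro (⟨i, hik, hgi⟩ | ⟨i, hik, hgi⟩)
    · exact c.mem_win_iff.mpr ⟨q, c.mem_QL.mpr ⟨i, hik, hgi⟩, rfl⟩
    · exact c.mem_win_iff.mpr ⟨c.oth q, c.mem_QL.mpr ⟨i, hik, hgi⟩, c.pOf_oth hqS⟩

lemma win_not_both {q x : α} {k k' : ℕ} (hx : x ∈ c.PB)
    (h1 : ∃ i < k, c.gk i x = some q) (h2 : ∃ i < k', c.gk i x = some (c.oth q)) : False := by
  obtain ⟨i, _, hgi⟩ := h1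
  obtain ⟨j, _, hgj⟩ := h2
  exact c.gk_ne_oth hx hgi hgj rfl

/-- the main counting bound: each port receives weight at least `t`. -/
lemma port_lower {q : α} (hq : q ∈ c.PB) :
    (c.t : ℝ) ≤ (∑ x ∈ c.PB, if (∃ i < c.t, c.gk i x = some q) then c.lam x else 0) +
      ∑ p ∈ (c.PB.filter (fun x => c.isStart x)) ×ˢ Finset.Ico 1 c.t,
        (if (∃ i < p.2, c.gk i p.1 = some q) then (1:ℝ) else 0) := by
  have htpos : 0 < c.t := c.ht
  have hnn1 : ∀ x ∈ c.PB, (0:ℝ) ≤ if (∃ i < c.t, c.gk i x = some q) then c.lam x else 0 := by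
    intro x _
    split_ifs
    · exact c.lam_nonneg' x
    · exact le_refl 0
  have hnn2 : ∀ p ∈ (c.PB.filter (fun x => c.isStart x)) ×ˢ Finset.Ico 1 c.t,
      (0:ℝ) ≤ if (∃ i < p.2, c.gk i p.1 = some q) then (1:ℝ) else 0 := by
    intro p _
    split_ifs
    · norm_num
    · exact le_refl 0
  by_cases hcyc : c.cyc q
  · -- cyclic case : the whole orbit contributes t/per each
    have hper1 := (c.per_spec hcyc).1
    have hpert := (c.per_spec hcyc).2.1
    set f : ℕ → α := fun i => (c.gk i q).getD q with hf
    have hfdef : ∀ i < c.per q, c.gk i q = some (f i) := by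
      intro i hi
      have h1 : (c.gk i q).isSome := c.gk_cyc_isSome hcyc i
      obtain ⟨y, hy⟩ := Option.isSome_iff_exists.mp h1
      rw [hf]
      simp only [hy, Option.getD_some]
    have key : ∀ i j, i < c.per q → j < c.per q → i < j → f i ≠ f j := by
      intro i j hi hj hlt hij
      have h1 : c.gk i q = some (f i) := hfdef i hi
      have h2 : c.gk j q = some (f i) := by rw [hij]; exact hfdef j hj
      have h3 : c.gk ((j - i) + i) q = (c.gk i q).bind (c.gk (j - i)) := c.gk_add _ _ _
      rw [Nat.sub_add_cancel (le_of_lt hlt), h2, h1, Option.bind_some] at h3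
      have hpereq : c.per (f i) = c.per q := c.per_eq_of_reach hcyc h1
      have hle : c.per (f i) ≤ j - i := Nat.sInf_le ⟨by omega, h3.symm⟩
      omega
    have hinj : Set.InjOn f ↑(Finset.range (c.per q)) := by
      intro i hi j hj hij
      simp only [Finset.coe_range, Set.mem_Iio] at hi hj
      rcases lt_trichotomy i j with h | h | h
      · exact absurd hij (key i j hi hj h)
      · exact h
      · exact absurd hij.symm (key j i hj hi h)
    set Img := (Finset.range (c.per q)).image f with hImg
    have hImgPB : Img ⊆ c.PB := by
      intro y hy
      obtain ⟨i, hi, rfl⟩ := Finset.mem_image.mp hy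
      exact c.gk_mem_PB hq (hfdef i (Finset.mem_range.mp hi))
    have hcard : Img.card = c.per q := by
      rw [hImg, Finset.card_image_of_injOn hinj, Finset.card_range]
    have hval : ∀ y ∈ Img, (if (∃ i < c.t, c.gk i y = some q) then c.lam y else 0)
        = (c.t : ℝ) / (c.per q : ℝ) := by
      intro y hy
      obtain ⟨i, hi, rfl⟩ := Finset.mem_image.mp hy
      have hgi := hfdef i (Finset.mem_range.mp hi)
      have hcy : c.cyc (f i) := c.cyc_fwd hcyc hgi
      have hpereq : c.per (f i) = c.per q := c.per_eq_of_reach hcyc hgi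
      obtain ⟨i', hi', hgi'⟩ := c.reach_back hcyc hgi
      rw [if_pos ⟨i', by omega, hgi'⟩, lam, if_pos hcy, hpereq]
    have hsum1 : (c.t : ℝ) ≤ ∑ x ∈ c.PB,
        if (∃ i < c.t, c.gk i x = some q) then c.lam x else 0 := by
      have h1 : ∑ y ∈ Img, (if (∃ i < c.t, c.gk i y = some q) then c.lam y else 0)
          = (c.per q : ℝ) * ((c.t : ℝ) / (c.per q : ℝ)) := by
        rw [Finset.sum_congr rfl hval, Finset.sum_const, hcard, nsmul_eq_mul]
      have hpq : (0:ℝ) < (c.per q : ℝ) := by exact_mod_cast hper1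
      have h2 : (c.per q : ℝ) * ((c.t : ℝ) / (c.per q : ℝ)) = (c.t : ℝ) := by
        field_simp
      calc (c.t:ℝ) = (c.per q : ℝ) * ((c.t : ℝ) / (c.per q : ℝ)) := h2.symm
        _ = ∑ y ∈ Img, (if (∃ i < c.t, c.gk i y = some q) then c.lam y else 0) := h1.symm
        _ ≤ _ := Finset.sum_le_sum_of_subset_of_nonneg hImgPB (fun x hx _ => hnn1 x hx)
    have hsum2 : (0:ℝ) ≤ ∑ p ∈ (c.PB.filter (fun x => c.isStart x)) ×ˢ Finset.Ico 1 c.t,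
        (if (∃ i < p.2, c.gk i p.1 = some q) then (1:ℝ) else 0) := Finset.sum_nonneg hnn2
    linarith
  · -- acyclic case: backward iterates plus prefixes at the start
    set D := (Finset.range c.t).filter (fun i => (c.gkinv i q).isSome) with hD
    have h0D : (0:ℕ) ∈ D := by
      rw [hD]
      refine Finset.mem_filter.mpr ⟨Finset.mem_range.mpr htpos, ?_⟩
      rw [gkinv_zero]
      simp
    have hDne : D.Nonempty := ⟨0, h0D⟩
    set i₀ := D.max' hDne with hi₀
    have hi₀D : i₀ ∈ D := D.max'_mem hDne
    have hi₀t : i₀ < c.t := Finset.mem_range.mp (Finset.mem_filter.mp hi₀D).1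
    have hi₀some : (c.gkinv i₀ q).isSome := (Finset.mem_filter.mp hi₀D).2
    set f : ℕ → α := fun i => (c.gkinv i q).getD q with hf
    have hfdef : ∀ i ≤ i₀, c.gkinv i q = some (f i) := by
      intro i hi
      have h1 : (c.gkinv i q).isSome := c.gkinv_isSome_of_le hi hi₀some
      obtain ⟨y, hy⟩ := Option.isSome_iff_exists.mp h1
      rw [hf]
      simp only [hy, Option.getD_some]
    have hfgk : ∀ i, i ≤ i₀ → c.gk i (f i) = some q := fun i hi => c.gk_iff_gkinv.mpr (hfdef i hi)
    have hfPB : ∀ i, i ≤ i₀ → f i ∈ c.PB := fun i hi => c.gk_mem_PB_rev hq (hfgk i hi)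
    have key : ∀ i j, i ≤ i₀ → j ≤ i₀ → i < j → f i ≠ f j := by
      intro i j hi hj hlt hij
      have h1 : c.gk i (f i) = some q := hfgk i hi
      have h2 : c.gk j (f i) = some q := by rw [hij]; exact hfgk j hj
      have h3 : c.gk ((j - i) + i) (f i) = (c.gk i (f i)).bind (c.gk (j - i)) := c.gk_add _ _ _
      rw [Nat.sub_add_cancel (le_of_lt hlt), h2, h1, Option.bind_some] at h3
      exact hcyc ⟨j - i, by omega, by omega, h3.symm⟩
    have hinj : Set.InjOn f ↑(Finset.range (i₀ + 1)) := by
      intro i hi j hj hij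
      simp only [Finset.coe_range, Set.mem_Iio] at hi hj
      rcases lt_trichotomy i j with h | h | h
      · exact absurd hij (key i j (by omega) (by omega) h)
      · exact h
      · exact absurd hij.symm (key j i (by omega) (by omega) h)
    set Img := (Finset.range (i₀ + 1)).image f with hImg
    have hImgPB : Img ⊆ c.PB := by
      intro y hy
      obtain ⟨i, hi, rfl⟩ := Finset.mem_image.mp hy
      exact hfPB i (by have := Finset.mem_range.mp hi; omega)
    have hcard : Img.card = i₀ + 1 := by
      rw [hImg, Finset.card_image_of_injOn hinj, Finset.card_range]
    have hval : ∀ y ∈ Img, (if (∃ i < c.t, c.gk i y = some q) then c.lam y else 0) = 1 := by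
      intro y hy
      obtain ⟨i, hi, rfl⟩ := Finset.mem_image.mp hy
      have hile : i ≤ i₀ := by have := Finset.mem_range.mp hi; omega
      have hnc : ¬ c.cyc (f i) := fun hcy => hcyc (c.cyc_fwd hcy (hfgk i hile))
      rw [if_pos ⟨i, by omega, hfgk i hile⟩, lam, if_neg hnc]
    have hsum1 : ((i₀ : ℝ) + 1) ≤ ∑ x ∈ c.PB,
        if (∃ i < c.t, c.gk i x = some q) then c.lam x else 0 := by
      have h1 : ∑ y ∈ Img, (if (∃ i < c.t, c.gk i y = some q) then c.lam y else 0)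
          = ((i₀ : ℝ) + 1) := by
        rw [Finset.sum_congr rfl hval, Finset.sum_const, hcard, nsmul_eq_mul]
        push_cast
        ring
      rw [← h1]
      exact Finset.sum_le_sum_of_subset_of_nonneg hImgPB (fun x hx _ => hnn1 x hx)
    rcases Nat.lt_or_ge (i₀ + 1) c.t with hlt | hge
    · -- there is a genuine start with prefix windows
      set z := f i₀ with hz
      have hzPB : z ∈ c.PB := hfPB i₀ le_rfl
      have hnone : c.gkinv (i₀ + 1) q = none := by
        cases hcase : c.gkinv (i₀ + 1) q with
        | none => rfl
        | some w =>
          exfalso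
          have hmem : i₀ + 1 ∈ D := by
            rw [hD]
            refine Finset.mem_filter.mpr ⟨Finset.mem_range.mpr hlt, ?_⟩
            rw [hcase]; simp
          have := D.le_max' _ hmem
          omega
      have hginvz : c.ginv z = none := by
        have h1 := c.gkinv_succ' i₀ q
        rw [hnone, hfdef i₀ le_rfl, Option.bind_some] at h1
        exact h1.symm
      have hstart : c.isStart z := by
        rintro ⟨y, hy⟩
        have h2 : c.ginv z = some y := c.ginv_some.mpr hy
        rw [hginvz] at h2
        exact absurd h2 (by simp)
      set Pre := ({z} : Finset α) ×ˢ Finset.Ico (i₀ + 1) c.t with hPre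
      have hPreSub : Pre ⊆ (c.PB.filter (fun x => c.isStart x)) ×ˢ Finset.Ico 1 c.t := by
        apply Finset.product_subset_product
        · intro y hy
          rw [Finset.mem_singleton.mp hy]
          exact Finset.mem_filter.mpr ⟨hzPB, hstart⟩
        · exact Finset.Ico_subset_Ico (by omega) le_rfl
      have hPreval : ∀ p ∈ Pre, (if (∃ i < p.2, c.gk i p.1 = some q) then (1:ℝ) else 0) = 1 := by
        intro p hp
        obtain ⟨hp1, hp2⟩ := Finset.mem_product.mp hp
        have hp1' : p.1 = z := Finset.mem_singleton.mp hp1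
        have hp2' := Finset.mem_Ico.mp hp2
        rw [if_pos ⟨i₀, by omega, by rw [hp1']; exact hfgk i₀ le_rfl⟩]
      have hPrecard : Pre.card = c.t - (i₀ + 1) := by
        rw [hPre, Finset.card_product, Finset.card_singleton, Nat.card_Ico, one_mul]
      have hsum2 : ((c.t - (i₀ + 1) : ℕ) : ℝ) ≤
          ∑ p ∈ (c.PB.filter (fun x => c.isStart x)) ×ˢ Finset.Ico 1 c.t,
            (if (∃ i < p.2, c.gk i p.1 = some q) then (1:ℝ) else 0) := by
        have h1 : ∑ p ∈ Pre, (if (∃ i < p.2, c.gk i p.1 = some q) then (1:ℝ) else 0)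
            = ((c.t - (i₀ + 1) : ℕ) : ℝ) := by
          rw [Finset.sum_congr rfl hPreval, Finset.sum_const, hPrecard, nsmul_eq_mul, mul_one]
        rw [← h1]
        exact Finset.sum_le_sum_of_subset_of_nonneg hPreSub (fun p hp _ => hnn2 p hp)
      have hcast : ((i₀ : ℝ) + 1) + ((c.t - (i₀ + 1) : ℕ) : ℝ) = (c.t : ℝ) := by
        rw [Nat.cast_sub (by omega)]
        push_cast
        ring
      linarith
    · -- all of range t is defined backwards; the full windows already give t
      have hsum2 : (0:ℝ) ≤ ∑ p ∈ (c.PB.filter (fun x => c.isStart x)) ×ˢ Finset.Ico 1 c.t,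
          (if (∃ i < p.2, c.gk i p.1 = some q) then (1:ℝ) else 0) := Finset.sum_nonneg hnn2
      have : (c.t : ℝ) ≤ (i₀ : ℝ) + 1 := by exact_mod_cast hge
      linarith


/- ===================  coverage upper bound: helpers  =================== -/

lemma cyc_oth {v : α} (h : c.cyc v) : c.cyc (c.oth v) := by
  obtain ⟨L, hL1, hLt, hgk⟩ := h
  exact ⟨L, hL1, hLt, c.gk_oth hgk⟩

/-- the orbit of a (short-)cyclic port. -/
noncomputable def orb (v : α) : Finset α :=
  (Finset.range (c.per v)).image (fun i => (c.gk i v).getD v)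

lemma orb_mem {v y : α} (hv : c.cyc v) : y ∈ c.orb v ↔ ∃ i < c.per v, c.gk i v = some y := by
  constructor
  · intro hy
    obtain ⟨i, hi, rfl⟩ := Finset.mem_image.mp hy
    have h1 : (c.gk i v).isSome := c.gk_cyc_isSome hv i
    obtain ⟨y', hy'⟩ := Option.isSome_iff_exists.mp h1
    exact ⟨i, Finset.mem_range.mp hi, by rw [hy']; simp [hy']⟩
  · rintro ⟨i, hi, h⟩
    exact Finset.mem_image.mpr ⟨i, Finset.mem_range.mpr hi, by rw [h]; simp⟩

lemma orb_subset_PB {v : α} (hv : c.cyc v) (hvPB : v ∈ c.PB) : c.orb v ⊆ c.PB := by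
  intro y hy
  obtain ⟨i, _, h⟩ := (c.orb_mem hv).mp hy
  exact c.gk_mem_PB hvPB h

lemma orb_sum {v : α} (hv : c.cyc v) : ∑ y ∈ c.orb v, c.lam y = (c.t : ℝ) := by
  have hper1 := (c.per_spec hv).1
  have hfdef : ∀ i < c.per v, c.gk i v = some ((c.gk i v).getD v) := by
    intro i hi
    have h1 : (c.gk i v).isSome := c.gk_cyc_isSome hv i
    obtain ⟨y, hy⟩ := Option.isSome_iff_exists.mp h1
    rw [hy]
    simp
  have key : ∀ i j, i < c.per v → j < c.per v → i < j →
      (c.gk i v).getD v ≠ (c.gk j v).getD v := by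
    intro i j hi hj hlt hij
    have h1 : c.gk i v = some ((c.gk i v).getD v) := hfdef i hi
    have h2 : c.gk j v = some ((c.gk i v).getD v) := by rw [hij]; exact hfdef j hj
    have h3 : c.gk ((j - i) + i) v = (c.gk i v).bind (c.gk (j - i)) := c.gk_add _ _ _
    rw [Nat.sub_add_cancel (le_of_lt hlt), h2, h1, Option.bind_some] at h3
    have hpereq : c.per ((c.gk i v).getD v) = c.per v := c.per_eq_of_reach hv h1
    have hle : c.per ((c.gk i v).getD v) ≤ j - i := Nat.sInf_le ⟨by omega, h3.symm⟩
    omega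
  have hinj : Set.InjOn (fun i => (c.gk i v).getD v) ↑(Finset.range (c.per v)) := by
    intro i hi j hj hij
    simp only [Finset.coe_range, Set.mem_Iio] at hi hj
    rcases lt_trichotomy i j with h | h | h
    · exact absurd hij (key i j hi hj h)
    · exact h
    · exact absurd hij.symm (key j i hj hi h)
  have hcard : (c.orb v).card = c.per v := by
    rw [orb, Finset.card_image_of_injOn hinj, Finset.card_range]
  have hval : ∀ y ∈ c.orb v, c.lam y = (c.t : ℝ) / (c.per v : ℝ) := by
    intro y hy
    obtain ⟨i, hi, h⟩ := (c.orb_mem hv).mp hy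
    have hcy : c.cyc y := c.cyc_fwd hv h
    have hpereq : c.per y = c.per v := c.per_eq_of_reach hv h
    rw [lam, if_pos hcy, hpereq]
  rw [Finset.sum_congr rfl hval, Finset.sum_const, hcard, nsmul_eq_mul]
  have hpv : (0:ℝ) < (c.per v : ℝ) := by exact_mod_cast hper1
  field_simp

lemma orb_disj {v : α} (hv : c.cyc v) (hvPB : v ∈ c.PB) :
    Disjoint (c.orb v) (c.orb (c.oth v)) := by
  have hvS : v ∈ c.S := c.PB_subset_S hvPB
  rw [Finset.disjoint_left]
  intro y hy1 hy2
  obtain ⟨i, _, h1⟩ := (c.orb_mem hv).mp hy1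
  obtain ⟨j, _, h2⟩ := (c.orb_mem (c.cyc_oth hv)).mp hy2
  -- h2 : gk j (oth v) = some y ⇒ gk j (oth y) = some (oth (oth v)) = some v
  have h3 : c.gk j (c.oth y) = some v := by
    have := c.gk_oth h2
    rwa [c.oth_oth hvS] at this
  have h4 : c.gk (i + j) (c.oth y) = some y := c.gk_trans h3 h1
  have hyPB : y ∈ c.PB := c.gk_mem_PB hvPB h1
  have hoyPB : c.oth y ∈ c.PB := c.oth_mem_PB hyPB
  have h5 : y = c.oth (c.oth y) := (c.oth_oth (c.PB_subset_S hyPB)).symm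
  exact c.no_palindrome (i + j) (c.oth y) hoyPB (h5 ▸ h4)

/-- every conflict of `a` with a window is witnessed by a slot port. -/
lemma slot_exists {x : α} {k : ℕ} {a : Finset α} (hx : x ∈ c.PB)
    (ha : a ∈ c.MAof (c.win x k)) :
    ∃ u, ((∃ i < k, c.gk i x = some u) ∨ u = c.oth x) ∧ u ∈ c.PB ∧ c.pinv u ∈ a := by
  obtain ⟨haA, z, hza, hπz⟩ := c.mem_MAof.mp ha
  obtain ⟨b, hb, hπzb⟩ := Finset.mem_biUnion.mp hπz
  obtain ⟨u, huQL, rfl⟩ := c.mem_win_iff.mp hb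
  obtain ⟨i, hik, hgi⟩ := c.mem_QL.mp huQL
  have huPB : u ∈ c.PB := c.gk_mem_PB hx hgi
  have huS : u ∈ c.S := c.PB_subset_S huPB
  have hzEA : z ∈ c.EA := c.mem_EA_iff.mpr ⟨a, haA, hza⟩
  have hzI : z ∈ c.I := c.EA_subset_I hzEA
  rcases (c.mem_pOf_iff huS).mp hπzb with hπu | hπo
  · exact ⟨u, Or.inl ⟨i, hik, hgi⟩, huPB, by rw [c.pinv_eq hzI hπu]; exact hza⟩
  · rcases Nat.eq_zero_or_pos i with rfl | hipos
    · have hux : u = x := Option.some_inj.mp (c.gk_zero x ▸ hgi).symm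
      refine ⟨c.oth x, Or.inr rfl, c.oth_mem_PB hx, ?_⟩
      rw [c.pinv_eq hzI (hux ▸ hπo)]
      exact hza
    · obtain ⟨j, rfl⟩ : ∃ j, i = j + 1 := ⟨i - 1, by omega⟩
      obtain ⟨y, hgy, hgyu⟩ := c.gk_some_succ' hgi
      obtain ⟨hyPB, hpy, hqy, hue⟩ := c.g_some.mp hgyu
      have hW : c.π (c.oth (c.pinv y)) ∈ c.S := c.PB_subset_S hqy
      have hothu : c.oth u = c.π (c.oth (c.pinv y)) := by
        rw [hue, c.oth_oth hW]
      have hoI : c.oth (c.pinv y) ∈ c.I := c.EA_subset_I (c.oth_mem_EA hpy)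
      have hzeq : z = c.oth (c.pinv y) := by
        apply c.hbij.injOn hzI hoI
        rw [hπo, hothu]
      refine ⟨y, Or.inl ⟨j, by omega, hgy⟩, hyPB, ?_⟩
      have hpyS : c.pinv y ∈ c.S := c.EA_subset_S hpy
      have h1 : c.pinv y ∈ c.pOf z := by
        rw [hzeq, c.pOf_oth hpyS]
        exact (c.pOf_spec hpyS).2
      have h2 : c.pOf z = a := c.pOf_eq (c.hAE haA) hza
      rwa [h2] at h1

lemma two_port {a : Finset α} (haA : a ∈ c.A) {u₁ u₂ : α} (hu₁ : u₁ ∈ c.PB)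
    (hz₁ : c.pinv u₁ ∈ a) (hu₂ : u₂ ∈ c.PB) (hz₂ : c.pinv u₂ ∈ a) (hne : u₁ ≠ u₂) :
    c.g u₁ = some (c.oth u₂) := by
  have haE : a ∈ c.E := c.hAE haA
  have hp₁EA : c.pinv u₁ ∈ c.EA := c.mem_EA_iff.mpr ⟨a, haA, hz₁⟩
  have hp₂EA : c.pinv u₂ ∈ c.EA := c.mem_EA_iff.mpr ⟨a, haA, hz₂⟩
  have hp₁S : c.pinv u₁ ∈ c.S := c.EA_subset_S hp₁EA
  have hpne : c.pinv u₂ ≠ c.pinv u₁ := by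
    intro h
    apply hne
    rw [← c.pi_pinv (c.PB_subset_J hu₁), ← c.pi_pinv (c.PB_subset_J hu₂), h]
  have hpa : c.pOf (c.pinv u₁) = a := c.pOf_eq haE hz₁
  have hoth : c.pinv u₂ = c.oth (c.pinv u₁) :=
    c.oth_eq_of_mem hp₁S (by rw [hpa]; exact hz₂) hpne
  have hπ2 : c.π (c.oth (c.pinv u₁)) = u₂ := by
    rw [← hoth]
    exact c.pi_pinv (c.PB_subset_J hu₂)
  refine c.g_some.mpr ⟨hu₁, hp₁EA, ?_, ?_⟩
  · rw [hπ2]; exact hu₂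
  · rw [hπ2]



/- ===================  coverage upper bound: per-slot counts  =================== -/

lemma T1T3_bound {u : α} (hu : u ∈ c.PB) (hnc : ¬ c.cyc u) :
    (∑ x ∈ c.PB, if (∃ i < c.t, c.gk i x = some u) then c.lam x else 0) +
    (∑ pr ∈ (c.PB.filter (fun x => c.isStart x)) ×ˢ Finset.Ico 1 c.t,
      if (∃ i < pr.2, c.gk i pr.1 = some u) then (1:ℝ) else 0) ≤ (c.t : ℝ) := by
  have htpos : 0 < c.t := c.ht
  set D := (Finset.range c.t).filter (fun i => (c.gkinv i u).isSome) with hD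
  have h0D : (0:ℕ) ∈ D := by
    rw [hD]
    refine Finset.mem_filter.mpr ⟨Finset.mem_range.mpr htpos, ?_⟩
    rw [gkinv_zero]
    simp
  have hDne : D.Nonempty := ⟨0, h0D⟩
  set i₀ := D.max' hDne with hi₀
  have hi₀D : i₀ ∈ D := D.max'_mem hDne
  have hi₀t : i₀ < c.t := Finset.mem_range.mp (Finset.mem_filter.mp hi₀D).1
  have hi₀some : (c.gkinv i₀ u).isSome := (Finset.mem_filter.mp hi₀D).2
  set f : ℕ → α := fun i => (c.gkinv i u).getD u with hf
  have hfdef : ∀ i ≤ i₀, c.gkinv i u = some (f i) := by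
    intro i hi
    have h1 : (c.gkinv i u).isSome := c.gkinv_isSome_of_le hi hi₀some
    obtain ⟨y, hy⟩ := Option.isSome_iff_exists.mp h1
    rw [hf]
    simp only [hy, Option.getD_some]
  have hfgk : ∀ i, i ≤ i₀ → c.gk i (f i) = some u := fun i hi => c.gk_iff_gkinv.mpr (hfdef i hi)
  set Img := (Finset.range (i₀ + 1)).image f with hImg
  have hcardImg : Img.card ≤ i₀ + 1 :=
    le_trans Finset.card_image_le (by rw [Finset.card_range])
  -- witness index is unique
  have huniq : ∀ x : α, ∀ i j : ℕ, i < c.t → j < c.t → c.gk i x = some u → c.gk j x = some u →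
      i = j := by
    intro x i j hit hjt hgi hgj
    by_contra hne
    rcases lt_or_gt_of_ne hne with h | h
    · have h3 : c.gk ((j - i) + i) x = (c.gk i x).bind (c.gk (j - i)) := c.gk_add _ _ _
      rw [Nat.sub_add_cancel (le_of_lt h), hgj, hgi, Option.bind_some] at h3
      exact hnc ⟨j - i, by omega, by omega, h3.symm⟩
    · have h3 : c.gk ((i - j) + j) x = (c.gk j x).bind (c.gk (i - j)) := c.gk_add _ _ _
      rw [Nat.sub_add_cancel (le_of_lt h), hgi, hgj, Option.bind_some] at h3
      exact hnc ⟨i - j, by omega, by omega, h3.symm⟩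
  -- T1 bound
  have hT1 : (∑ x ∈ c.PB, if (∃ i < c.t, c.gk i x = some u) then c.lam x else 0)
      ≤ ((i₀ : ℝ) + 1) := by
    have hptw : ∀ x ∈ c.PB, (if (∃ i < c.t, c.gk i x = some u) then c.lam x else 0)
        ≤ if x ∈ Img then (1:ℝ) else 0 := by
      intro x hx
      by_cases hcond : (∃ i < c.t, c.gk i x = some u)
      · obtain ⟨i, hit, hgi⟩ := id hcond
        have hiD : i ∈ D := by
          rw [hD]
          exact Finset.mem_filter.mpr ⟨Finset.mem_range.mpr hit,
            by rw [c.gk_iff_gkinv.mp hgi]; simp⟩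
        have hile : i ≤ i₀ := D.le_max' i hiD
        have hxf : x = f i := by
          have := hfdef i hile
          have h2 : c.gkinv i u = some x := c.gk_iff_gkinv.mp hgi
          rw [this] at h2
          exact (Option.some_inj.mp h2).symm
        have hxImg : x ∈ Img := Finset.mem_image.mpr ⟨i, Finset.mem_range.mpr (by omega), hxf.symm⟩
        have hncx : ¬ c.cyc x := fun hcx => hnc (c.cyc_fwd hcx hgi)
        rw [if_pos hcond, if_pos hxImg, lam, if_neg hncx]
      · rw [if_neg hcond]
        split_ifs <;> norm_num
    calc (∑ x ∈ c.PB, if (∃ i < c.t, c.gk i x = some u) then c.lam x else 0)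
        ≤ ∑ x ∈ c.PB, if x ∈ Img then (1:ℝ) else 0 := Finset.sum_le_sum hptw
      _ = ∑ x ∈ c.PB ∩ Img, (1:ℝ) := Finset.sum_ite_mem _ _ _
      _ = ((c.PB ∩ Img).card : ℝ) := by rw [Finset.sum_const, nsmul_eq_mul, mul_one]
      _ ≤ ((i₀ : ℝ) + 1) := by
          have h1 : (c.PB ∩ Img).card ≤ i₀ + 1 :=
            le_trans (Finset.card_le_card Finset.inter_subset_right) hcardImg
          exact_mod_cast h1
  -- T3 bound
  have hT3 : (∑ pr ∈ (c.PB.filter (fun x => c.isStart x)) ×ˢ Finset.Ico 1 c.t,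
      if (∃ i < pr.2, c.gk i pr.1 = some u) then (1:ℝ) else 0)
      ≤ ((c.t - (i₀ + 1) : ℕ) : ℝ) := by
    have hptw : ∀ pr ∈ (c.PB.filter (fun x => c.isStart x)) ×ˢ Finset.Ico 1 c.t,
        (if (∃ i < pr.2, c.gk i pr.1 = some u) then (1:ℝ) else 0)
        ≤ if pr ∈ ({f i₀} : Finset α) ×ˢ Finset.Ico (i₀ + 1) c.t then (1:ℝ) else 0 := by
      rintro ⟨z, j⟩ hpr
      obtain ⟨hz1, hj1⟩ := Finset.mem_product.mp hpr
      have hzst : c.isStart z := (Finset.mem_filter.mp hz1).2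
      have hjIco := Finset.mem_Ico.mp hj1
      by_cases hcond : (∃ i < j, c.gk i z = some u)
      · obtain ⟨i, hij, hgi⟩ := hcond
        have hit : i < c.t := by omega
        have hiD : i ∈ D := by
          rw [hD]
          exact Finset.mem_filter.mpr ⟨Finset.mem_range.mpr hit,
            by rw [c.gk_iff_gkinv.mp hgi]; simp⟩
        have hile : i ≤ i₀ := D.le_max' i hiD
        -- if i < i₀ then z has a predecessor, contradicting start
        have hii₀ : i = i₀ := by
          by_contra hne
          have hlt : i < i₀ := by omega
          have h1 : (c.gkinv (i + 1) u).isSome := c.gkinv_isSome_of_le (by omega) hi₀some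
          have h2 : c.gkinv (i + 1) u = (c.gkinv i u).bind c.ginv := c.gkinv_succ' i u
          have h3 : c.gkinv i u = some z := c.gk_iff_gkinv.mp hgi
          rw [h2, h3, Option.bind_some] at h1
          obtain ⟨y, hy⟩ := Option.isSome_iff_exists.mp h1
          exact hzst ⟨y, c.ginv_some.mp hy⟩
        have hzf : z = f i₀ := by
          have h3 : c.gkinv i₀ u = some z := by rw [← hii₀]; exact c.gk_iff_gkinv.mp hgi
          rw [hfdef i₀ le_rfl] at h3
          exact (Option.some_inj.mp h3).symm
        have hmem : ((z, j) : α × ℕ) ∈ ({f i₀} : Finset α) ×ˢ Finset.Ico (i₀ + 1) c.t := by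
          refine Finset.mem_product.mpr ⟨Finset.mem_singleton.mpr hzf, ?_⟩
          refine Finset.mem_Ico.mpr ⟨by omega, by omega⟩
        rw [if_pos ⟨i, hij, hgi⟩, if_pos hmem]
      · rw [if_neg hcond]
        split_ifs <;> norm_num
    calc (∑ pr ∈ (c.PB.filter (fun x => c.isStart x)) ×ˢ Finset.Ico 1 c.t,
        if (∃ i < pr.2, c.gk i pr.1 = some u) then (1:ℝ) else 0)
        ≤ ∑ pr ∈ (c.PB.filter (fun x => c.isStart x)) ×ˢ Finset.Ico 1 c.t,
            (if pr ∈ ({f i₀} : Finset α) ×ˢ Finset.Ico (i₀ + 1) c.t then (1:ℝ) else 0) :=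
          Finset.sum_le_sum hptw
      _ = ∑ pr ∈ ((c.PB.filter (fun x => c.isStart x)) ×ˢ Finset.Ico 1 c.t) ∩
            (({f i₀} : Finset α) ×ˢ Finset.Ico (i₀ + 1) c.t), (1:ℝ) := Finset.sum_ite_mem _ _ _
      _ ≤ ((c.t - (i₀ + 1) : ℕ) : ℝ) := by
          rw [Finset.sum_const, nsmul_eq_mul, mul_one]
          have h1 : (((c.PB.filter (fun x => c.isStart x)) ×ˢ Finset.Ico 1 c.t) ∩
              (({f i₀} : Finset α) ×ˢ Finset.Ico (i₀ + 1) c.t)).card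
              ≤ (({f i₀} : Finset α) ×ˢ Finset.Ico (i₀ + 1) c.t).card :=
            Finset.card_le_card Finset.inter_subset_right
          have h2 : (({f i₀} : Finset α) ×ˢ Finset.Ico (i₀ + 1) c.t).card = c.t - (i₀ + 1) := by
            rw [Finset.card_product, Finset.card_singleton, Nat.card_Ico, one_mul]
          rw [h2] at h1
          exact_mod_cast h1
  have hcast : ((i₀ : ℝ) + 1) + ((c.t - (i₀ + 1) : ℕ) : ℝ) = (c.t : ℝ) := by
    rw [Nat.cast_sub (by omega)]
    push_cast
    ring
  linarith

lemma T2_bound {u : α} (hu : u ∈ c.PB) (hnc : ¬ c.cyc u) :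
    (∑ x ∈ c.PB, if u = c.oth x then c.lam x else 0) ≤ 1 := by
  have hptw : ∀ x ∈ c.PB, (if u = c.oth x then c.lam x else 0)
      ≤ if x = c.oth u then (1:ℝ) else 0 := by
    intro x hx
    have hxS : x ∈ c.S := c.PB_subset_S hx
    by_cases hcond : u = c.oth x
    · have hxeq : x = c.oth u := by rw [hcond, c.oth_oth hxS]
      have hncx : ¬ c.cyc x := by
        intro hcx
        apply hnc
        have := c.cyc_oth hcx
        rwa [← hcond] at this
      rw [if_pos hcond, if_pos hxeq, lam, if_neg hncx]
    · rw [if_neg hcond]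
      split_ifs <;> norm_num
  calc (∑ x ∈ c.PB, if u = c.oth x then c.lam x else 0)
      ≤ ∑ x ∈ c.PB, (if x = c.oth u then (1:ℝ) else 0) := Finset.sum_le_sum hptw
    _ = if c.oth u ∈ c.PB then (1:ℝ) else 0 := Finset.sum_ite_eq' _ _ _
    _ ≤ 1 := by split_ifs <;> norm_num

lemma T4_bound {u : α} :
    (∑ pr ∈ (c.PB.filter (fun x => c.isStart x)) ×ˢ Finset.Ico 1 c.t,
      if u = c.oth pr.1 then (1:ℝ) else 0)
    ≤ if c.isStart (c.oth u) then (c.t : ℝ) - 1 else 0 := by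
  by_cases hst : c.isStart (c.oth u)
  · rw [if_pos hst]
    have hptw : ∀ pr ∈ (c.PB.filter (fun x => c.isStart x)) ×ˢ Finset.Ico 1 c.t,
        (if u = c.oth pr.1 then (1:ℝ) else 0)
        ≤ if pr ∈ ({c.oth u} : Finset α) ×ˢ Finset.Ico 1 c.t then (1:ℝ) else 0 := by
      rintro ⟨z, j⟩ hpr
      obtain ⟨hz1, hj1⟩ := Finset.mem_product.mp hpr
      have hzPB : z ∈ c.PB := (Finset.mem_filter.mp hz1).1
      have hzS : z ∈ c.S := c.PB_subset_S hzPB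
      by_cases hcond : u = c.oth z
      · have hzeq : z = c.oth u := by rw [hcond, c.oth_oth hzS]
        rw [if_pos hcond, if_pos (Finset.mem_product.mpr
          ⟨Finset.mem_singleton.mpr hzeq, hj1⟩)]
      · rw [if_neg hcond]
        split_ifs <;> norm_num
    calc _ ≤ ∑ pr ∈ (c.PB.filter (fun x => c.isStart x)) ×ˢ Finset.Ico 1 c.t,
          (if pr ∈ ({c.oth u} : Finset α) ×ˢ Finset.Ico 1 c.t then (1:ℝ) else 0) :=
        Finset.sum_le_sum hptw
      _ = ∑ pr ∈ ((c.PB.filter (fun x => c.isStart x)) ×ˢ Finset.Ico 1 c.t) ∩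
            (({c.oth u} : Finset α) ×ˢ Finset.Ico 1 c.t), (1:ℝ) := Finset.sum_ite_mem _ _ _
      _ ≤ (c.t : ℝ) - 1 := by
          rw [Finset.sum_const, nsmul_eq_mul, mul_one]
          have h1 : (((c.PB.filter (fun x => c.isStart x)) ×ˢ Finset.Ico 1 c.t) ∩
              (({c.oth u} : Finset α) ×ˢ Finset.Ico 1 c.t)).card
              ≤ (({c.oth u} : Finset α) ×ˢ Finset.Ico 1 c.t).card :=
            Finset.card_le_card Finset.inter_subset_right
          have h2 : (({c.oth u} : Finset α) ×ˢ Finset.Ico 1 c.t).card = c.t - 1 := by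
            rw [Finset.card_product, Finset.card_singleton, Nat.card_Ico, one_mul]
          rw [h2] at h1
          have h3 : ((c.t - 1 : ℕ) : ℝ) = (c.t : ℝ) - 1 := by
            rw [Nat.cast_sub c.ht]
            norm_num
          rw [← h3]
          exact_mod_cast h1
  · rw [if_neg hst]
    apply le_of_eq
    apply Finset.sum_eq_zero
    rintro ⟨z, j⟩ hpr
    obtain ⟨hz1, _⟩ := Finset.mem_product.mp hpr
    have hzPB : z ∈ c.PB := (Finset.mem_filter.mp hz1).1
    have hzS : z ∈ c.S := c.PB_subset_S hzPB
    have hzst : c.isStart z := (Finset.mem_filter.mp hz1).2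
    rw [if_neg]
    intro hcond
    have hzeq : z = c.oth u := by rw [hcond, c.oth_oth hzS]
    rw [hzeq] at hzst
    exact hst hzst

lemma Ua_card {a : Finset α} (haA : a ∈ c.A) :
    (c.PB.filter (fun u => c.pinv u ∈ a)).card ≤ 2 := by
  have haE : a ∈ c.E := c.hAE haA
  have hinj : Set.InjOn c.pinv ↑(c.PB.filter (fun u => c.pinv u ∈ a)) := by
    intro u hu v hv huv
    simp only [Finset.coe_filter, Set.mem_setOf_eq] at hu hv
    rw [← c.pi_pinv (c.PB_subset_J hu.1), ← c.pi_pinv (c.PB_subset_J hv.1), huv]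
  have hmaps : ∀ u ∈ c.PB.filter (fun u => c.pinv u ∈ a), c.pinv u ∈ a := by
    intro u hu
    exact (Finset.mem_filter.mp hu).2
  calc (c.PB.filter (fun u => c.pinv u ∈ a)).card ≤ a.card :=
      Finset.card_le_card_of_injOn c.pinv hmaps hinj
    _ = 2 := c.hE2 a haE


/- ===================  Engine lemmas (to be proven)  =================== -/

lemma win_isMove {x : α} {k : ℕ} (hx : x ∈ c.PB) (hk : k ≤ c.t) :
    IsMove c.M c.E c.A (2 * c.t + 1) (c.MAof (c.win x k)) (c.win x k) := by
  refine ⟨c.MAof_subset_A, ?_, ?_, c.feas (c.win_subset_BA hx)⟩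
  · intro b hb
    have h1 := c.win_subset_BA hx hb
    rw [Finset.mem_sdiff] at h1 ⊢
    exact ⟨c.hBE h1.1, h1.2⟩
  · have h1 := c.MAof_win_card (k := k) hx
    have h2 := c.win_card (x := x) (k := k)
    omega

lemma fam_isMove : ∀ i ∈ c.fam, c.MAmv i ⊆ c.A \ c.B ∧ c.MBof i ⊆ c.B \ c.A ∧
    IsMove c.M c.E c.A (2 * c.t + 1) (c.MAmv i) (c.MBof i) := by
  intro i hi
  rcases c.mem_fam.mp hi with ⟨x, hx, rfl⟩ | ⟨z, hz, hst, j, hj1, hj2, rfl⟩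
  · exact ⟨c.MAof_subset_AB (c.win_subset_BA hx), c.win_subset_BA hx,
      c.win_isMove hx le_rfl⟩
  · exact ⟨c.MAof_subset_AB (c.win_subset_BA hz), c.win_subset_BA hz,
      c.win_isMove hz (by omega)⟩

lemma fam_covB : ∀ b ∈ c.B \ c.A,
    (2 * (c.t : ℝ)) ≤ ∑ i ∈ c.fam, if b ∈ c.MBof i then c.Lam i else 0 := by
  intro b hb
  have hbE : b ∈ c.E := c.hBE (Finset.mem_sdiff.mp hb).1
  have hbcard : b.card = 2 := c.hE2 b hbE
  have hbne : b.Nonempty := by rw [← Finset.card_pos, hbcard]; omega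
  obtain ⟨p, hp⟩ := hbne
  have hpPB : p ∈ c.PB := c.mem_PB_iff.mpr ⟨b, hb, hp⟩
  have hpS : p ∈ c.S := c.PB_subset_S hpPB
  have hopPB : c.oth p ∈ c.PB := c.oth_mem_PB hpPB
  have hbp : b = c.pOf p := (c.pOf_eq hbE hp).symm
  rw [c.sum_fam]
  have hsplit1 : ∀ x ∈ c.PB, (if b ∈ c.MBof (Sum.inl x) then c.Lam (Sum.inl x) else 0)
      = (if (∃ i < c.t, c.gk i x = some p) then c.lam x else 0)
        + (if (∃ i < c.t, c.gk i x = some (c.oth p)) then c.lam x else 0) := by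
    intro x hx
    have hmb : c.MBof (Sum.inl x) = c.win x c.t := rfl
    have hlm : c.Lam (Sum.inl x) = c.lam x := rfl
    rw [hmb, hlm, hbp]
    by_cases h1 : (∃ i < c.t, c.gk i x = some p) <;>
      by_cases h2 : (∃ i < c.t, c.gk i x = some (c.oth p))
    · exact (c.win_not_both hx h1 h2).elim
    · rw [if_pos ((c.win_mem_split hpPB hx).mpr (Or.inl h1)), if_pos h1, if_neg h2]; ring
    · rw [if_pos ((c.win_mem_split hpPB hx).mpr (Or.inr h2)), if_neg h1, if_pos h2]; ring
    · rw [if_neg (fun hc => (c.win_mem_split hpPB hx).mp hc |>.elim h1 h2),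
        if_neg h1, if_neg h2]; ring
  have hsplit2 : ∀ pr ∈ (c.PB.filter (fun x => c.isStart x)) ×ˢ Finset.Ico 1 c.t,
      (if b ∈ c.MBof (Sum.inr pr) then c.Lam (Sum.inr pr) else 0)
      = (if (∃ i < pr.2, c.gk i pr.1 = some p) then (1:ℝ) else 0)
        + (if (∃ i < pr.2, c.gk i pr.1 = some (c.oth p)) then (1:ℝ) else 0) := by
    rintro ⟨z, j⟩ hpr
    obtain ⟨hz1, _⟩ := Finset.mem_product.mp hpr
    have hzPB : z ∈ c.PB := (Finset.mem_filter.mp hz1).1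
    have hmb : c.MBof (Sum.inr (z, j)) = c.win z j := rfl
    have hlm : c.Lam (Sum.inr (z, j)) = 1 := rfl
    rw [hmb, hlm, hbp]
    by_cases h1 : (∃ i < j, c.gk i z = some p) <;>
      by_cases h2 : (∃ i < j, c.gk i z = some (c.oth p))
    · exact (c.win_not_both hzPB h1 h2).elim
    · rw [if_pos ((c.win_mem_split hpPB hzPB).mpr (Or.inl h1)), if_pos h1, if_neg h2]; ring
    · rw [if_pos ((c.win_mem_split hpPB hzPB).mpr (Or.inr h2)), if_neg h1, if_pos h2]; ring
    · rw [if_neg (fun hc => (c.win_mem_split hpPB hzPB).mp hc |>.elim h1 h2),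
        if_neg h1, if_neg h2]; ring
  rw [Finset.sum_congr rfl hsplit1, Finset.sum_congr rfl hsplit2,
    Finset.sum_add_distrib, Finset.sum_add_distrib]
  have h1 := c.port_lower hpPB
  have h2 := c.port_lower hopPB
  linarith

lemma fam_covA : ∀ a ∈ c.A \ c.B,
    (∑ i ∈ c.fam, if a ∈ c.MAmv i then c.Lam i else 0) ≤ 2 * (c.t : ℝ) + 2 := by
  intro a ha
  have haA : a ∈ c.A := (Finset.mem_sdiff.mp ha).1
  have haE : a ∈ c.E := c.hAE haA
  have ht1 : (1:ℝ) ≤ (c.t : ℝ) := by exact_mod_cast c.ht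
  set Ua := c.PB.filter (fun u => c.pinv u ∈ a) with hUa
  have hUaPB : ∀ u ∈ Ua, u ∈ c.PB := fun u hu => (Finset.mem_filter.mp hu).1
  have hUainv : ∀ u ∈ Ua, c.pinv u ∈ a := fun u hu => (Finset.mem_filter.mp hu).2
  have hslot : ∀ x ∈ c.PB, ∀ k : ℕ, a ∈ c.MAof (c.win x k) →
      ∃ u ∈ Ua, ((∃ i < k, c.gk i x = some u) ∨ u = c.oth x) := by
    intro x hx k hma
    obtain ⟨u, hcond, huPB, hupinv⟩ := c.slot_exists hx hma
    exact ⟨u, Finset.mem_filter.mpr ⟨huPB, hupinv⟩, hcond⟩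
  rw [c.sum_fam]
  by_cases hcy : ∃ u ∈ Ua, c.cyc u
  · -- CYCLIC CASE : everything lives on one short cycle
    obtain ⟨u₀, hu₀Ua, hu₀cyc⟩ := hcy
    have hu₀PB : u₀ ∈ c.PB := hUaPB u₀ hu₀Ua
    have hu₀S : u₀ ∈ c.S := c.PB_subset_S hu₀PB
    have hocyc : c.cyc (c.oth u₀) := c.cyc_oth hu₀cyc
    have hallcyc : ∀ u ∈ Ua, c.cyc u := by
      intro u huUa
      by_cases huu : u = u₀
      · rwa [huu]
      · have hg : c.g u = some (c.oth u₀) :=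
          c.two_port haA (hUaPB u huUa) (hUainv u huUa) hu₀PB (hUainv u₀ hu₀Ua) huu
        exact c.cyc_bwd_step hg hocyc
    have hclaim : ∀ x ∈ c.PB, a ∈ c.MAof (c.win x c.t) →
        x ∈ c.orb u₀ ∪ c.orb (c.oth u₀) := by
      intro x hx hma
      obtain ⟨u, huUa, hcond⟩ := hslot x hx c.t hma
      have hucyc := hallcyc u huUa
      have huPB := hUaPB u huUa
      rcases hcond with ⟨i, hit, hgi⟩ | hoth
      · by_cases huu : u = u₀
        · subst huu
          have hxcyc : c.cyc x := c.cyc_bwd hgi hucyc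
          obtain ⟨i', hi', hgi'⟩ := c.reach_back hxcyc hgi
          have hpereq : c.per u = c.per x := c.per_eq_of_reach hxcyc hgi
          exact Finset.mem_union_left _ ((c.orb_mem hucyc).mpr ⟨i', by omega, hgi'⟩)
        · have hg : c.g u = some (c.oth u₀) :=
            c.two_port haA huPB (hUainv u huUa) hu₀PB (hUainv u₀ hu₀Ua) huu
          have h1 : c.gk 1 u = some (c.oth u₀) := by rw [c.gk_one]; exact hg
          have hreach : c.gk (1 + i) x = some (c.oth u₀) := c.gk_trans hgi h1
          have hxcyc : c.cyc x := c.cyc_bwd hreach hocyc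
          obtain ⟨i', hi', hgi'⟩ := c.reach_back hxcyc hreach
          have hpereq : c.per (c.oth u₀) = c.per x := c.per_eq_of_reach hxcyc hreach
          exact Finset.mem_union_right _ ((c.orb_mem hocyc).mpr ⟨i', by omega, hgi'⟩)
      · have hxeq : x = c.oth u := by rw [hoth, c.oth_oth (c.PB_subset_S hx)]
        by_cases huu : u = u₀
        · subst huu
          refine Finset.mem_union_right _ ((c.orb_mem hocyc).mpr
            ⟨0, (c.per_spec hocyc).1, ?_⟩)
          rw [gk_zero, hxeq]
        · have hg : c.g u₀ = some (c.oth u) :=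
            c.two_port haA hu₀PB (hUainv u₀ hu₀Ua) huPB (hUainv u huUa)
              (fun h => huu h.symm)
          have hper1 := (c.per_spec hu₀cyc).1
          have h1 : c.gk 1 u₀ = some x := by rw [c.gk_one, hg, hxeq]
          have h2 : c.gk (1 % c.per u₀) u₀ = some x := by
            rw [← c.gk_mod hu₀cyc 1]; exact h1
          exact Finset.mem_union_left _ ((c.orb_mem hu₀cyc).mpr
            ⟨1 % c.per u₀, Nat.mod_lt _ (by omega), h2⟩)
    have hpre0 : ∑ pr ∈ (c.PB.filter (fun x => c.isStart x)) ×ˢ Finset.Ico 1 c.t,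
        (if a ∈ c.MAmv (Sum.inr pr) then c.Lam (Sum.inr pr) else 0) = 0 := by
      apply Finset.sum_eq_zero
      rintro ⟨z, j⟩ hpr
      obtain ⟨hz1, _⟩ := Finset.mem_product.mp hpr
      have hzPB : z ∈ c.PB := (Finset.mem_filter.mp hz1).1
      have hzst : c.isStart z := (Finset.mem_filter.mp hz1).2
      rw [if_neg]
      intro hma
      have hma' : a ∈ c.MAof (c.win z j) := hma
      obtain ⟨u, huUa, hcond⟩ := hslot z hzPB j hma'
      have hucyc := hallcyc u huUa
      rcases hcond with ⟨i, _, hgi⟩ | hoth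
      · exact (c.not_start_of_cyc (c.cyc_bwd hgi hucyc)) hzst
      · have hzeq : z = c.oth u := by rw [hoth, c.oth_oth (c.PB_subset_S hzPB)]
        exact (c.not_start_of_cyc (hzeq ▸ c.cyc_oth hucyc)) hzst
    rw [hpre0, add_zero]
    have hfull : (∑ x ∈ c.PB, if a ∈ c.MAmv (Sum.inl x) then c.Lam (Sum.inl x) else 0)
        ≤ ∑ x ∈ c.PB, (if x ∈ c.orb u₀ ∪ c.orb (c.oth u₀) then c.lam x else 0) := by
      apply Finset.sum_le_sum
      intro x hx
      by_cases hma : a ∈ c.MAmv (Sum.inl x)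
      · have hma' : a ∈ c.MAof (c.win x c.t) := hma
        rw [if_pos hma, if_pos (hclaim x hx hma')]
        exact le_refl _
      · rw [if_neg hma]
        split_ifs
        · exact c.lam_nonneg' x
        · exact le_refl 0
    have h2 : ∑ x ∈ c.PB, (if x ∈ c.orb u₀ ∪ c.orb (c.oth u₀) then c.lam x else 0)
        = ∑ x ∈ c.PB ∩ (c.orb u₀ ∪ c.orb (c.oth u₀)), c.lam x := Finset.sum_ite_mem _ _ _
    have h3 : ∑ x ∈ c.PB ∩ (c.orb u₀ ∪ c.orb (c.oth u₀)), c.lam x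
        ≤ ∑ x ∈ c.orb u₀ ∪ c.orb (c.oth u₀), c.lam x :=
      Finset.sum_le_sum_of_subset_of_nonneg Finset.inter_subset_right
        (fun x _ _ => c.lam_nonneg' x)
    have h4 : ∑ x ∈ c.orb u₀ ∪ c.orb (c.oth u₀), c.lam x = (c.t:ℝ) + (c.t:ℝ) := by
      rw [Finset.sum_union (c.orb_disj hu₀cyc hu₀PB), c.orb_sum hu₀cyc, c.orb_sum hocyc]
    linarith
  · -- ACYCLIC CASE : slot counting
    push_neg at hcy
    have hfull : (∑ x ∈ c.PB, if a ∈ c.MAmv (Sum.inl x) then c.Lam (Sum.inl x) else 0)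
        ≤ ∑ u ∈ Ua, ((∑ x ∈ c.PB, if (∃ i < c.t, c.gk i x = some u) then c.lam x else 0)
            + (∑ x ∈ c.PB, if u = c.oth x then c.lam x else 0)) := by
      have hptw : ∀ x ∈ c.PB, (if a ∈ c.MAmv (Sum.inl x) then c.Lam (Sum.inl x) else 0)
          ≤ ∑ u ∈ Ua, ((if (∃ i < c.t, c.gk i x = some u) then c.lam x else 0)
              + (if u = c.oth x then c.lam x else 0)) := by
        intro x hx
        have hterm_nn : ∀ u ∈ Ua,
            (0:ℝ) ≤ (if (∃ i < c.t, c.gk i x = some u) then c.lam x else 0)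
              + (if u = c.oth x then c.lam x else 0) := by
          intro u _
          have := c.lam_nonneg' x
          split_ifs <;> linarith
        by_cases hma : a ∈ c.MAmv (Sum.inl x)
        · have hma' : a ∈ c.MAof (c.win x c.t) := hma
          obtain ⟨u, huUa, hcond⟩ := hslot x hx c.t hma'
          have hterm : c.lam x ≤ (if (∃ i < c.t, c.gk i x = some u) then c.lam x else 0)
              + (if u = c.oth x then c.lam x else 0) := by
            have := c.lam_nonneg' x
            rcases hcond with h | h
            · rw [if_pos h]; split_ifs <;> linarith
            · rw [if_pos h]; split_ifs <;> linarith
          rw [if_pos hma]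
          calc c.Lam (Sum.inl x) = c.lam x := rfl
            _ ≤ _ := hterm
            _ ≤ _ := Finset.single_le_sum hterm_nn huUa
        · rw [if_neg hma]
          exact Finset.sum_nonneg hterm_nn
      calc (∑ x ∈ c.PB, if a ∈ c.MAmv (Sum.inl x) then c.Lam (Sum.inl x) else 0)
          ≤ ∑ x ∈ c.PB, ∑ u ∈ Ua,
              ((if (∃ i < c.t, c.gk i x = some u) then c.lam x else 0)
                + (if u = c.oth x then c.lam x else 0)) := Finset.sum_le_sum hptw
        _ = ∑ u ∈ Ua, ∑ x ∈ c.PB,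
              ((if (∃ i < c.t, c.gk i x = some u) then c.lam x else 0)
                + (if u = c.oth x then c.lam x else 0)) := Finset.sum_comm
        _ = ∑ u ∈ Ua, ((∑ x ∈ c.PB, if (∃ i < c.t, c.gk i x = some u) then c.lam x else 0)
            + (∑ x ∈ c.PB, if u = c.oth x then c.lam x else 0)) := by
            exact Finset.sum_congr rfl fun u _ => Finset.sum_add_distrib
    have hpre : (∑ pr ∈ (c.PB.filter (fun x => c.isStart x)) ×ˢ Finset.Ico 1 c.t,
        if a ∈ c.MAmv (Sum.inr pr) then c.Lam (Sum.inr pr) else 0)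
        ≤ ∑ u ∈ Ua, ((∑ pr ∈ (c.PB.filter (fun x => c.isStart x)) ×ˢ Finset.Ico 1 c.t,
            if (∃ i < pr.2, c.gk i pr.1 = some u) then (1:ℝ) else 0)
          + (∑ pr ∈ (c.PB.filter (fun x => c.isStart x)) ×ˢ Finset.Ico 1 c.t,
            if u = c.oth pr.1 then (1:ℝ) else 0)) := by
      have hptw : ∀ pr ∈ (c.PB.filter (fun x => c.isStart x)) ×ˢ Finset.Ico 1 c.t,
          (if a ∈ c.MAmv (Sum.inr pr) then c.Lam (Sum.inr pr) else 0)
          ≤ ∑ u ∈ Ua, ((if (∃ i < pr.2, c.gk i pr.1 = some u) then (1:ℝ) else 0)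
              + (if u = c.oth pr.1 then (1:ℝ) else 0)) := by
        rintro ⟨z, j⟩ hpr
        obtain ⟨hz1, _⟩ := Finset.mem_product.mp hpr
        have hzPB : z ∈ c.PB := (Finset.mem_filter.mp hz1).1
        have hterm_nn : ∀ u ∈ Ua,
            (0:ℝ) ≤ (if (∃ i < j, c.gk i z = some u) then (1:ℝ) else 0)
              + (if u = c.oth z then (1:ℝ) else 0) := by
          intro u _
          split_ifs <;> norm_num
        by_cases hma : a ∈ c.MAmv (Sum.inr (z, j))
        · have hma' : a ∈ c.MAof (c.win z j) := hma
          obtain ⟨u, huUa, hcond⟩ := hslot z hzPB j hma'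
          have hterm : (1:ℝ) ≤ (if (∃ i < j, c.gk i z = some u) then (1:ℝ) else 0)
              + (if u = c.oth z then (1:ℝ) else 0) := by
            rcases hcond with h | h
            · rw [if_pos h]; split_ifs <;> norm_num
            · rw [if_pos h]; split_ifs <;> norm_num
          rw [if_pos hma]
          calc c.Lam (Sum.inr (z, j)) = 1 := rfl
            _ ≤ _ := hterm
            _ ≤ _ := Finset.single_le_sum hterm_nn huUa
        · rw [if_neg hma]
          exact Finset.sum_nonneg hterm_nn
      calc (∑ pr ∈ (c.PB.filter (fun x => c.isStart x)) ×ˢ Finset.Ico 1 c.t,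
          if a ∈ c.MAmv (Sum.inr pr) then c.Lam (Sum.inr pr) else 0)
          ≤ ∑ pr ∈ (c.PB.filter (fun x => c.isStart x)) ×ˢ Finset.Ico 1 c.t, ∑ u ∈ Ua,
              ((if (∃ i < pr.2, c.gk i pr.1 = some u) then (1:ℝ) else 0)
                + (if u = c.oth pr.1 then (1:ℝ) else 0)) := Finset.sum_le_sum hptw
        _ = ∑ u ∈ Ua, ∑ pr ∈ (c.PB.filter (fun x => c.isStart x)) ×ˢ Finset.Ico 1 c.t,
              ((if (∃ i < pr.2, c.gk i pr.1 = some u) then (1:ℝ) else 0)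
                + (if u = c.oth pr.1 then (1:ℝ) else 0)) := Finset.sum_comm
        _ = _ := Finset.sum_congr rfl fun u _ => Finset.sum_add_distrib
    -- per-slot bound
    have hWbound : ∀ u ∈ Ua,
        ((∑ x ∈ c.PB, if (∃ i < c.t, c.gk i x = some u) then c.lam x else 0)
          + (∑ x ∈ c.PB, if u = c.oth x then c.lam x else 0))
        + ((∑ pr ∈ (c.PB.filter (fun x => c.isStart x)) ×ˢ Finset.Ico 1 c.t,
            if (∃ i < pr.2, c.gk i pr.1 = some u) then (1:ℝ) else 0)
          + (∑ pr ∈ (c.PB.filter (fun x => c.isStart x)) ×ˢ Finset.Ico 1 c.t,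
            if u = c.oth pr.1 then (1:ℝ) else 0))
        ≤ (c.t : ℝ) + 1 + (if c.isStart (c.oth u) then (c.t:ℝ) - 1 else 0) := by
      intro u huUa
      have h13 := c.T1T3_bound (hUaPB u huUa) (hcy u huUa)
      have h2 := c.T2_bound (hUaPB u huUa) (hcy u huUa)
      have h4 := c.T4_bound (u := u)
      linarith
    have hcard : Ua.card ≤ 2 := c.Ua_card haA
    have htotal : (∑ i ∈ c.fam, 0) = 0 := by simp
    -- combine
    have hcomb : (∑ x ∈ c.PB, if a ∈ c.MAmv (Sum.inl x) then c.Lam (Sum.inl x) else 0)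
        + (∑ pr ∈ (c.PB.filter (fun x => c.isStart x)) ×ˢ Finset.Ico 1 c.t,
            if a ∈ c.MAmv (Sum.inr pr) then c.Lam (Sum.inr pr) else 0)
        ≤ ∑ u ∈ Ua, ((c.t : ℝ) + 1 + (if c.isStart (c.oth u) then (c.t:ℝ) - 1 else 0)) := by
      have h1 := Finset.sum_le_sum hWbound
      calc _ ≤ (∑ u ∈ Ua, ((∑ x ∈ c.PB, if (∃ i < c.t, c.gk i x = some u) then c.lam x else 0)
              + (∑ x ∈ c.PB, if u = c.oth x then c.lam x else 0)))
            + ∑ u ∈ Ua, ((∑ pr ∈ (c.PB.filter (fun x => c.isStart x)) ×ˢ Finset.Ico 1 c.t,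
                if (∃ i < pr.2, c.gk i pr.1 = some u) then (1:ℝ) else 0)
              + (∑ pr ∈ (c.PB.filter (fun x => c.isStart x)) ×ˢ Finset.Ico 1 c.t,
                if u = c.oth pr.1 then (1:ℝ) else 0)) := add_le_add hfull hpre
        _ = ∑ u ∈ Ua, (((∑ x ∈ c.PB, if (∃ i < c.t, c.gk i x = some u) then c.lam x else 0)
              + (∑ x ∈ c.PB, if u = c.oth x then c.lam x else 0))
            + ((∑ pr ∈ (c.PB.filter (fun x => c.isStart x)) ×ˢ Finset.Ico 1 c.t,
                if (∃ i < pr.2, c.gk i pr.1 = some u) then (1:ℝ) else 0)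
              + (∑ pr ∈ (c.PB.filter (fun x => c.isStart x)) ×ˢ Finset.Ico 1 c.t,
                if u = c.oth pr.1 then (1:ℝ) else 0))) := Finset.sum_add_distrib.symm
        _ ≤ _ := h1
    refine le_trans hcomb ?_
    -- final case analysis on Ua
    rcases Nat.lt_or_ge Ua.card 2 with hc2 | hc2
    · rcases Nat.lt_or_ge Ua.card 1 with hc1 | hc1
      · have hUaemp : Ua = ∅ := Finset.card_eq_zero.mp (by omega)
        rw [hUaemp]
        simp
        linarith
      · obtain ⟨u, hu⟩ := Finset.card_eq_one.mp (by omega : Ua.card = 1)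
        rw [hu, Finset.sum_singleton]
        split_ifs <;> linarith
    · have hc2' : Ua.card = 2 := by omega
      obtain ⟨u₁, u₂, hne, hUa2⟩ := Finset.card_eq_two.mp hc2'
      have hu₁ : u₁ ∈ Ua := by rw [hUa2]; simp
      have hu₂ : u₂ ∈ Ua := by rw [hUa2]; simp
      have hg12 : c.g u₂ = some (c.oth u₁) :=
        c.two_port haA (hUaPB u₂ hu₂) (hUainv u₂ hu₂) (hUaPB u₁ hu₁) (hUainv u₁ hu₁)
          (fun h => hne h.symm)
      have hg21 : c.g u₁ = some (c.oth u₂) :=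
        c.two_port haA (hUaPB u₁ hu₁) (hUainv u₁ hu₁) (hUaPB u₂ hu₂) (hUainv u₂ hu₂) hne
      have hns₁ : ¬ c.isStart (c.oth u₁) := fun hs => hs ⟨u₂, hg12⟩
      have hns₂ : ¬ c.isStart (c.oth u₂) := fun hs => hs ⟨u₁, hg21⟩
      rw [hUa2, Finset.sum_pair hne, if_neg hns₁, if_neg hns₂]
      linarith

end Cfg

end WPD

open WPD

theorem weighted_parity_delta_local_opt
    (M : Matroid α) (S : Finset α) (hground : M.E = ↑S)
    (hsbo : M.StronglyBaseOrderable)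
    (E : Finset (Finset α)) (hE : IsPairPartition S E)
    (n : ℕ) (hn : E.card = n)
    (w : Finset α → ℝ) (hw : ∀ e ∈ E, 0 ≤ w e)
    (t : ℕ) (ht : 1 ≤ t) (htn : t ≤ n)
    (B : Finset (Finset α)) (hBE : B ⊆ E) (hB : FeasibleSet M B)
    (hBmax : ∀ B' ⊆ E, FeasibleSet M B' → ∑ e ∈ B', w e ≤ ∑ e ∈ B, w e)
    (A : Finset (Finset α)) (hAE : A ⊆ E) (hA : FeasibleSet M A)
    (hAloc : ∀ Abar Bbar, IsMove M E A (2 * t + 1) Abar Bbar →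
      ∑ e ∈ Bbar, w e - ∑ e ∈ Abar, w e < (1 / (n : ℝ) ^ 2) * ∑ e ∈ A, w e) :
    (1 - 2 / (t + 2 : ℝ)) * ∑ e ∈ B, w e ≤ ∑ e ∈ A, w e := by
  classical
  have hn1 : 1 ≤ n := le_trans ht htn
  have hnR : (0:ℝ) < (n:ℝ) := by exact_mod_cast hn1
  have hwA0 : 0 ≤ ∑ e ∈ A, w e := Finset.sum_nonneg (fun e he => hw e (hAE he))
  obtain ⟨I, hIb, hAI⟩ := hA.exists_isBase_superset
  obtain ⟨J, hJb, hBJ⟩ := hB.exists_isBase_superset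
  have hIfin : I.Finite := S.finite_toSet.subset (hground ▸ hIb.subset_ground)
  obtain ⟨π, hbij, hexch, hfix⟩ := exists_good_bij M hsbo hIb hJb hIfin
  set c : Cfg α := ⟨M, S, E, A, B, t, n, I, J, π, hE.1, hE.2.1, hE.2.2, hn, ht, htn,
    hAE, hBE, hAI, hBJ, hbij, hexch, hfix⟩ with hc
  -- engine facts
  have e1 := c.lam_nonneg
  have e2 := c.fam_isMove
  have e3 := c.fam_mass
  have e4 := c.fam_covB
  have e5 := c.fam_covA
  set F := c.fam with hF
  set Λ := c.Lam with hΛ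
  set MA := c.MAmv with hMA
  set MB := c.MBof with hMB
  set wA : ℝ := ∑ e ∈ A, w e with hwA
  -- each move's weighted gain is at most its weight times δ wA
  have key : ∀ i ∈ F, Λ i * (∑ e ∈ MB i, w e - ∑ e ∈ MA i, w e)
      ≤ Λ i * ((1 / (n : ℝ) ^ 2) * wA) := by
    intro i hi
    exact mul_le_mul_of_nonneg_left (le_of_lt (hAloc _ _ (e2 i hi).2.2)) (e1 i hi)
  have hδwA : 0 ≤ (1 / (n : ℝ) ^ 2) * wA := by positivity
  have hmn : ((c.B \ c.A).card : ℝ) ≤ (n:ℝ) := by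
    have : (B \ A).card ≤ E.card := Finset.card_le_card (fun x hx =>
      hBE (Finset.mem_sdiff.mp hx).1)
    have hBA : c.B \ c.A = B \ A := rfl
    rw [hBA]
    exact_mod_cast hn ▸ this
  have sum1 : ∑ i ∈ F, Λ i * (∑ e ∈ MB i, w e - ∑ e ∈ MA i, w e) ≤ 2 * wA := by
    calc ∑ i ∈ F, Λ i * (∑ e ∈ MB i, w e - ∑ e ∈ MA i, w e)
        ≤ ∑ i ∈ F, Λ i * ((1 / (n : ℝ) ^ 2) * wA) := Finset.sum_le_sum key
      _ = (∑ i ∈ F, Λ i) * ((1 / (n : ℝ) ^ 2) * wA) := by rw [Finset.sum_mul]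
      _ ≤ (2 * (c.t : ℝ) * ((c.B \ c.A).card)) * ((1 / (n : ℝ) ^ 2) * wA) := by
          exact mul_le_mul_of_nonneg_right e3 hδwA
      _ ≤ (2 * (n : ℝ) * (n : ℝ)) * ((1 / (n : ℝ) ^ 2) * wA) := by
          apply mul_le_mul_of_nonneg_right _ hδwA
          have htn' : (c.t : ℝ) ≤ (n : ℝ) := by exact_mod_cast htn
          have h1 : (0:ℝ) ≤ ((c.B \ c.A).card : ℝ) := by positivity
          nlinarith
      _ = 2 * wA := by field_simp
  -- rewrite the LHS as coverage sums
  have hsubB : ∀ i ∈ F, MB i ⊆ B \ A := fun i hi => (e2 i hi).2.1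
  have hsubA : ∀ i ∈ F, MA i ⊆ A \ B := fun i hi => (e2 i hi).1
  have swapB : ∑ i ∈ F, Λ i * ∑ e ∈ MB i, w e
      = ∑ b ∈ B \ A, (∑ i ∈ F, if b ∈ MB i then Λ i else 0) * w b := by
    have h1 : ∀ i ∈ F, Λ i * ∑ e ∈ MB i, w e
        = ∑ b ∈ B \ A, if b ∈ MB i then Λ i * w b else 0 := by
      intro i hi
      rw [Finset.sum_ite_mem, Finset.inter_eq_right.mpr (hsubB i hi), Finset.mul_sum]
    rw [Finset.sum_congr rfl h1, Finset.sum_comm]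
    refine Finset.sum_congr rfl fun b _ => ?_
    rw [Finset.sum_mul]
    refine Finset.sum_congr rfl fun i _ => ?_
    by_cases hbi : b ∈ MB i <;> simp [hbi]
  have swapA : ∑ i ∈ F, Λ i * ∑ e ∈ MA i, w e
      = ∑ a ∈ A \ B, (∑ i ∈ F, if a ∈ MA i then Λ i else 0) * w a := by
    have h1 : ∀ i ∈ F, Λ i * ∑ e ∈ MA i, w e
        = ∑ a ∈ A \ B, if a ∈ MA i then Λ i * w a else 0 := by
      intro i hi
      rw [Finset.sum_ite_mem, Finset.inter_eq_right.mpr (hsubA i hi), Finset.mul_sum]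
    rw [Finset.sum_congr rfl h1, Finset.sum_comm]
    refine Finset.sum_congr rfl fun a _ => ?_
    rw [Finset.sum_mul]
    refine Finset.sum_congr rfl fun i _ => ?_
    by_cases hai : a ∈ MA i <;> simp [hai]
  have hsplit : ∑ i ∈ F, Λ i * (∑ e ∈ MB i, w e - ∑ e ∈ MA i, w e)
      = ∑ i ∈ F, Λ i * ∑ e ∈ MB i, w e - ∑ i ∈ F, Λ i * ∑ e ∈ MA i, w e := by
    rw [← Finset.sum_sub_distrib]
    exact Finset.sum_congr rfl fun i _ => by ring
  have hB1 : 2 * (t:ℝ) * ∑ e ∈ B \ A, w e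
      ≤ ∑ b ∈ B \ A, (∑ i ∈ F, if b ∈ MB i then Λ i else 0) * w b := by
    rw [Finset.mul_sum]
    refine Finset.sum_le_sum fun b hb => ?_
    have hwb : 0 ≤ w b := hw b (hBE (Finset.mem_sdiff.mp hb).1)
    exact mul_le_mul_of_nonneg_right (e4 b hb) hwb
  have hA1 : ∑ a ∈ A \ B, (∑ i ∈ F, if a ∈ MA i then Λ i else 0) * w a
      ≤ (2 * (t:ℝ) + 2) * ∑ e ∈ A \ B, w e := by
    rw [Finset.mul_sum]
    refine Finset.sum_le_sum fun a ha => ?_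
    have hwa : 0 ≤ w a := hw a (hAE (Finset.mem_sdiff.mp ha).1)
    exact mul_le_mul_of_nonneg_right (e5 a ha) hwa
  have main : 2 * (t:ℝ) * ∑ e ∈ B \ A, w e
      ≤ (2 * (t:ℝ) + 2) * ∑ e ∈ A \ B, w e + 2 * wA := by
    have := sum1
    rw [hsplit, swapB, swapA] at this
    linarith
  -- split the sums
  have hsB : ∑ e ∈ B \ A, w e + ∑ e ∈ B ∩ A, w e = ∑ e ∈ B, w e := by
    have h1 : B ∩ A ⊆ B := Finset.inter_subset_left
    have h2 : B \ (B ∩ A) = B \ A := by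
      ext x; simp [Finset.mem_sdiff, Finset.mem_inter]
    rw [← h2]
    exact Finset.sum_sdiff h1
  have hsA : ∑ e ∈ A \ B, w e + ∑ e ∈ B ∩ A, w e = wA := by
    have h1 : A ∩ B ⊆ A := Finset.inter_subset_left
    have h2 : A \ (A ∩ B) = A \ B := by
      ext x; simp [Finset.mem_sdiff, Finset.mem_inter]
    have h3 : B ∩ A = A ∩ B := Finset.inter_comm _ _
    rw [h3, ← h2]
    exact Finset.sum_sdiff h1
  have hI0 : 0 ≤ ∑ e ∈ B ∩ A, w e :=
    Finset.sum_nonneg fun e he => hw e (hBE (Finset.mem_inter.mp he).1)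
  have htR : (1:ℝ) ≤ (t:ℝ) := by exact_mod_cast ht
  have key2 : (t:ℝ) * ∑ e ∈ B, w e ≤ ((t:ℝ) + 2) * wA := by
    set wBA := ∑ e ∈ B \ A, w e
    set wAB := ∑ e ∈ A \ B, w e
    set wI := ∑ e ∈ B ∩ A, w e
    set wB := ∑ e ∈ B, w e
    have h1 : wB = wBA + wI := by rw [← hsB]
    have h2 : wA = wAB + wI := by rw [← hsA]
    nlinarith [main, hI0]
  have htp : (0:ℝ) < (t:ℝ) + 2 := by linarith
  have hfrac : (1 : ℝ) - 2 / ((t:ℝ) + 2) = (t:ℝ) / ((t:ℝ) + 2) := by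
    field_simp
    ring
  rw [hfrac, div_mul_eq_mul_div, div_le_iff₀ htp]
  nlinarith [key2]
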